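/- arXiv:math/0701285 — 6 statements merged into one kernel-verified Lean document; each statement's English description precedes it below -/
import Mathlib

section
/- Let α, β ∈ ℝ with α > 1, and put γ = α^{-1}, δ = α^{-1}(1 − β). Then a positive integer n satisfies n = ⌊αm + β⌋ for some integer m if and only if 0 < {γn + δ} ≤ γ, where {x} denotes the fractional part of x. -/
open scoped BigOperators

noncomputable section

/-- Distance from `x` to the nearest integer. -/
def nint (x : ℝ) : ℝ := |x - round x|

/-- The set of exponents `t` such that `liminf n^t ⟦γ n⟧ = 0`. -/
def typeSet (γ : ℝ) : Set ℝ :=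
  {t : ℝ | Filter.liminf (fun n : ℕ => (n : ℝ) ^ t * nint (γ * n)) Filter.atTop = 0}

/-- An irrational number is of finite type if its type set is bounded above. -/
def IsOfFiniteType (γ : ℝ) : Prop := BddAbove (typeSet γ)

/-- The type of an irrational number. -/
def irrType (γ : ℝ) : ℝ := sSup (typeSet γ)

/-- The Beatty sequence `B_{α,β}`, as a set of positive natural numbers. -/
def BeattySet (α β : ℝ) : Set ℕ :=
  {n : ℕ | 0 < n ∧ ∃ m : ℤ, (n : ℤ) = ⌊α * m + β⌋}

/-- The 1-periodic function equal to `1` on `(0, γ]` modulo one and `0` elsewhere. -/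
def psi (γ : ℝ) (x : ℝ) : ℝ := if 0 < Int.fract x ∧ Int.fract x ≤ γ then 1 else 0

/-- `psiConv γ κ` is the `κ`-fold convolution `ψ^{(κ)}` of `psi γ` with itself. -/
def psiConv (γ : ℝ) : ℕ → ℝ → ℝ
  | 0 => fun _ => 0
  | 1 => psi γ
  | (k + 2) => fun x => ∫ y in (0:ℝ)..1, psiConv γ (k + 1) (x - y) * psi γ y

/-- The singular series `𝔖_κ(N)`. -/
def singularSeries (κ : ℕ) (N : ℕ) : ℝ :=
  (∏ p ∈ N.primeFactors, (1 + (-1 : ℝ) ^ κ / ((p : ℝ) - 1) ^ (κ - 1))) *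
    (∏' p : {p : ℕ // p.Prime ∧ ¬(p ∣ N)}, (1 + (-1 : ℝ) ^ (κ + 1) / (((p : ℕ) : ℝ) - 1) ^ κ))

open Classical in
/-- `G_κ(N) = ∑_{n₁+⋯+n_κ=N, nᵢ ∈ B_{α,β}} Λ(n₁)⋯Λ(n_κ)`. -/
def beattyG (α β : ℝ) (κ N : ℕ) : ℝ :=
  ∑ f ∈ Finset.Nat.antidiagonalTuple κ N,
    ∏ i : Fin κ, (if f i ∈ BeattySet α β then ArithmeticFunction.vonMangoldt (f i) else 0)

/-- `e(x) = e^{2πix}`. -/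
def e (x : ℝ) : ℂ := Complex.exp (2 * Real.pi * Complex.I * x)

/-- The Möbius function, real-valued. -/
def mu (n : ℕ) : ℝ := ((ArithmeticFunction.moebius n : ℤ) : ℝ)

theorem statement5 (α β : ℝ) (hα : 1 < α) (n : ℕ) (hn : 0 < n) :
    (∃ m : ℤ, (n : ℤ) = ⌊α * m + β⌋) ↔
      (0 < Int.fract (α⁻¹ * n + α⁻¹ * (1 - β)) ∧
        Int.fract (α⁻¹ * n + α⁻¹ * (1 - β)) ≤ α⁻¹) := by
  have hα0 : (0:ℝ) < α := lt_trans one_pos hα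
  have hinv : α * α⁻¹ = 1 := mul_inv_cancel₀ hα0.ne'
  have hinvlt : α⁻¹ < 1 := inv_lt_one_of_one_lt₀ hα
  have hinvpos : 0 < α⁻¹ := inv_pos.mpr hα0
  set x : ℝ := α⁻¹ * n + α⁻¹ * (1 - β) with hx
  clear_value x
  have hxα : x * α = (n : ℝ) + 1 - β := by
    rw [hx]; field_simp; ring
  constructor
  · rintro ⟨m, hm⟩
    have h1 : (n:ℝ) ≤ α * m + β := by
      have := Int.floor_le (α * m + β)
      rw [← hm] at this; exact_mod_cast this
    have h2 : α * m + β < (n:ℝ) + 1 := by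
      have := Int.lt_floor_add_one (α * m + β)
      rw [← hm] at this; exact_mod_cast this
    have hmx : (m:ℝ) < x := by nlinarith
    have hxm : x ≤ (m:ℝ) + α⁻¹ := by
      rw [← mul_le_mul_iff_of_pos_right hα0, hxα, add_mul, inv_mul_cancel₀ hα0.ne']
      linarith
    have hfl : ⌊x⌋ = m := by
      rw [Int.floor_eq_iff]
      exact ⟨hmx.le, lt_of_le_of_lt hxm (by linarith)⟩
    have hfr : Int.fract x = x - m := by
      rw [Int.fract, hfl]
    constructor
    · rw [hfr]; linarith
    · rw [hfr]; linarith
  · rintro ⟨h1, h2⟩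
    refine ⟨⌊x⌋, ?_⟩
    rw [Int.fract] at h1 h2
    have hub := mul_le_mul_of_nonneg_right h2 hα0.le
    have hlb := mul_lt_mul_of_pos_right h1 hα0
    have hic : α⁻¹ * α = 1 := inv_mul_cancel₀ hα0.ne'
    have hlo : (n:ℝ) ≤ α * ⌊x⌋ + β := by nlinarith [hxα, hub, hic]
    have hhi : α * ⌊x⌋ + β < (n:ℝ) + 1 := by nlinarith [hxα, hlb]
    symm
    rw [Int.floor_eq_iff]
    constructor
    · exact_mod_cast hlo
    · exact_mod_cast hhi

end
end

section
/- For every integer κ ≥ 2 and every integer N ≥ 1, the singular series satisfies the identity 𝔖_κ(N) = ∑_{d | N} ∑_{c ≥ 1, gcd(c,d) = 1} μ(c)^{κ+1} μ(d)^κ d / (φ(c)^κ φ(d)^κ), where the inner sum converges absolutely. -/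
open scoped BigOperators

noncomputable section

/-- The general term of the inner sum in the first singular-series identity. -/
def sTerm₁ (κ d : ℕ) (c : ℕ) : ℝ :=
  if 1 ≤ c ∧ Nat.gcd c d = 1 then
    mu c ^ (κ + 1) * mu d ^ κ * d / ((Nat.totient c : ℝ) ^ κ * (Nat.totient d : ℝ) ^ κ)
  else 0

namespace SS8

open Finset

/-- A function multiplicative on coprime arguments, applied to a product of distinct primes. -/
lemma map_prod_primes {M : Type*} [CommMonoid M] (F : ℕ → M) (h1 : F 1 = 1)
    (hmul : ∀ m n : ℕ, m.Coprime n → F (m * n) = F m * F n) :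
    ∀ t : Finset ℕ, (∀ p ∈ t, Nat.Prime p) → F (∏ p ∈ t, p) = ∏ p ∈ t, F p := by
  classical
  intro t
  induction t using Finset.induction_on with
  | empty => intro _; simpa using h1
  | @insert a s ha ih =>
    intro hp
    have hpa : Nat.Prime a := hp a (mem_insert_self a s)
    have hps : ∀ p ∈ s, Nat.Prime p := fun p hp' => hp p (mem_insert_of_mem hp')
    have hcop : Nat.Coprime a (∏ p ∈ s, p) :=
      Nat.Coprime.prod_right fun q hq =>
        (Nat.coprime_primes hpa (hps q hq)).mpr (by rintro rfl; exact ha hq)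
    rw [Finset.prod_insert ha, Finset.prod_insert ha, hmul _ _ hcop, ih hps]

lemma squarefree_prod_primes :
    ∀ t : Finset ℕ, (∀ p ∈ t, Nat.Prime p) → Squarefree (∏ p ∈ t, p) := by
  classical
  intro t
  induction t using Finset.induction_on with
  | empty => intro _; simpa using squarefree_one
  | @insert a s ha ih =>
    intro hp
    have hpa : Nat.Prime a := hp a (mem_insert_self a s)
    have hps : ∀ p ∈ s, Nat.Prime p := fun p hp' => hp p (mem_insert_of_mem hp')
    have hcop : Nat.Coprime a (∏ p ∈ s, p) :=
      Nat.Coprime.prod_right fun q hq =>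
        (Nat.coprime_primes hpa (hps q hq)).mpr (by rintro rfl; exact ha hq)
    rw [Finset.prod_insert ha]
    exact (Nat.squarefree_mul hcop).mpr ⟨hpa.squarefree, ih hps⟩

/-- the constant factor depending on `d` -/
def mval (κ d : ℕ) : ℝ := mu d ^ κ * d / (d.totient : ℝ) ^ κ

/-- the inner-sum function -/
def gf (κ d c : ℕ) : ℝ :=
  if Squarefree c ∧ Nat.Coprime c d then mu c ^ (κ + 1) / (c.totient : ℝ) ^ κ else 0

/-- the majorant -/
def hf (κ c : ℕ) : ℝ := if Squarefree c then ((c.totient : ℝ) ^ κ)⁻¹ else 0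

/-- the Euler factor deviation -/
def tP (κ p : ℕ) : ℝ := (-1 : ℝ) ^ (κ + 1) / ((p : ℝ) - 1) ^ κ

lemma mu_one : mu 1 = 1 := by simp [mu]

lemma mu_mul {m n : ℕ} (h : m.Coprime n) : mu (m * n) = mu m * mu n := by
  unfold mu
  rw [ArithmeticFunction.isMultiplicative_moebius.map_mul_of_coprime h]
  push_cast
  ring

lemma mu_prime {p : ℕ} (hp : p.Prime) : mu p = -1 := by
  simp [mu, ArithmeticFunction.moebius_apply_prime hp]

lemma abs_mu {c : ℕ} (hc : Squarefree c) : |mu c| = 1 := by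
  rw [mu, ArithmeticFunction.moebius_apply_of_squarefree hc]
  push_cast
  rw [abs_pow, abs_neg, abs_one, one_pow]

lemma mu_eq_zero {c : ℕ} (hc : ¬Squarefree c) : mu c = 0 := by
  simp [mu, ArithmeticFunction.moebius_eq_zero_of_not_squarefree hc]

lemma gf_one (κ d : ℕ) : gf κ d 1 = 1 := by
  simp [gf, squarefree_one, Nat.coprime_one_left, mu_one]

lemma gf_zero (κ d : ℕ) : gf κ d 0 = 0 := by
  simp [gf, not_squarefree_zero]

lemma gf_mul (κ d : ℕ) {m n : ℕ} (h : m.Coprime n) :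
    gf κ d (m * n) = gf κ d m * gf κ d n := by
  unfold gf
  by_cases h1 : Squarefree m ∧ Nat.Coprime m d
  · by_cases h2 : Squarefree n ∧ Nat.Coprime n d
    · rw [if_pos ⟨(Nat.squarefree_mul h).mpr ⟨h1.1, h2.1⟩,
        Nat.coprime_mul_iff_left.mpr ⟨h1.2, h2.2⟩⟩, if_pos h1, if_pos h2,
        mu_mul h, Nat.totient_mul h, Nat.cast_mul, mul_pow, mul_pow, div_mul_div_comm]
    · rw [if_neg, if_pos h1, if_neg h2, mul_zero]
      rintro ⟨hs, hc⟩
      exact h2 ⟨((Nat.squarefree_mul h).mp hs).2, (Nat.coprime_mul_iff_left.mp hc).2⟩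
  · rw [if_neg, if_neg h1, zero_mul]
    rintro ⟨hs, hc⟩
    exact h1 ⟨((Nat.squarefree_mul h).mp hs).1, (Nat.coprime_mul_iff_left.mp hc).1⟩

lemma hf_nonneg (κ c : ℕ) : 0 ≤ hf κ c := by
  unfold hf; split_ifs <;> positivity

lemma hf_one (κ : ℕ) : hf κ 1 = 1 := by simp [hf, squarefree_one]

lemma hf_mul (κ : ℕ) {m n : ℕ} (h : m.Coprime n) : hf κ (m * n) = hf κ m * hf κ n := by
  unfold hf
  by_cases h1 : Squarefree m
  · by_cases h2 : Squarefree n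
    · rw [if_pos ((Nat.squarefree_mul h).mpr ⟨h1, h2⟩), if_pos h1, if_pos h2,
        Nat.totient_mul h, Nat.cast_mul, mul_pow, mul_inv]
    · rw [if_neg, if_pos h1, if_neg h2, mul_zero]
      exact fun hs => h2 ((Nat.squarefree_mul h).mp hs).2
  · rw [if_neg, if_neg h1, zero_mul]
    exact fun hs => h1 ((Nat.squarefree_mul h).mp hs).1

lemma hf_prime (κ : ℕ) {p : ℕ} (hp : p.Prime) : hf κ p = (((p : ℝ) - 1) ^ κ)⁻¹ := by
  rw [hf, if_pos hp.squarefree, Nat.totient_prime hp, Nat.cast_sub hp.one_le, Nat.cast_one]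

lemma hf_eq_prod (κ : ℕ) {c : ℕ} (hc : Squarefree c) :
    hf κ c = ∏ p ∈ c.primeFactors, hf κ p := by
  have h := map_prod_primes (hf κ) (hf_one κ) (fun m n h => hf_mul κ h) c.primeFactors
    (fun p hp => Nat.prime_of_mem_primeFactors hp)
  rwa [Nat.prod_primeFactors_of_squarefree hc] at h

lemma norm_gf_le (κ d c : ℕ) : ‖gf κ d c‖ ≤ hf κ c := by
  unfold gf hf
  split_ifs with h1 h2 h2
  · rw [Real.norm_eq_abs, abs_div, abs_pow, abs_mu h1.1, one_pow, abs_pow,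
      abs_of_nonneg (Nat.cast_nonneg _), one_div]
  · exact absurd h1.1 h2
  · simpa using inv_nonneg.mpr (by positivity)
  · simp

lemma summable_pbound (κ : ℕ) (hκ : 2 ≤ κ) :
    Summable (fun n : ℕ => if n.Prime then hf κ n else 0) := by
  apply Summable.of_nonneg_of_le (f := fun n : ℕ => (2 : ℝ) ^ κ * (1 / (n : ℝ) ^ 2))
    (fun n => by split_ifs with h; exacts [hf_nonneg κ n, le_rfl])
  · intro n
    split_ifs with hp
    · have h2 : (2 : ℝ) ≤ (n : ℝ) := by exact_mod_cast hp.two_le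
      have hx : (n : ℝ) / 2 ≤ (n : ℝ) - 1 := by linarith
      have h1 : ((n : ℝ) / 2) ^ κ ≤ ((n : ℝ) - 1) ^ κ :=
        pow_le_pow_left₀ (by positivity) hx κ
      have h3 : (n : ℝ) ^ 2 ≤ (n : ℝ) ^ κ := pow_le_pow_right₀ (by linarith) hκ
      rw [hf_prime κ hp]
      calc (((n : ℝ) - 1) ^ κ)⁻¹ ≤ (((n : ℝ) / 2) ^ κ)⁻¹ := by
            apply inv_anti₀ (by positivity) h1
        _ = 2 ^ κ / (n : ℝ) ^ κ := by rw [div_pow, inv_div]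
        _ ≤ 2 ^ κ / (n : ℝ) ^ 2 := by
            apply div_le_div_of_nonneg_left _ (by positivity) h3
            positivity
        _ = 2 ^ κ * (1 / (n : ℝ) ^ 2) := by ring
    · positivity
  · exact (Real.summable_one_div_nat_pow.mpr one_lt_two).mul_left _

lemma summable_hf (κ : ℕ) (hκ : 2 ≤ κ) : Summable (hf κ) := by
  classical
  apply summable_of_sum_range_le (c := Real.exp (∑' n : ℕ, if n.Prime then hf κ n else 0))
    (hf_nonneg κ)
  intro n
  set s := Finset.range n with hs
  set P := s.biUnion Nat.primeFactors with hP
  have hPprime : ∀ p ∈ P, Nat.Prime p := by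
    intro p hp
    rw [hP, Finset.mem_biUnion] at hp
    obtain ⟨c, -, hc⟩ := hp
    exact Nat.prime_of_mem_primeFactors hc
  have hsub : ∀ c ∈ s, c.primeFactors ⊆ P := by
    intro c hc p hp
    exact Finset.mem_biUnion.mpr ⟨c, hc, hp⟩
  calc ∑ i ∈ s, hf κ i = ∑ i ∈ s.filter Squarefree, hf κ i := by
        refine (Finset.sum_filter_of_ne ?_).symm
        intro x _ hx
        by_contra h
        exact hx (by simp [hf, h])
    _ = ∑ i ∈ s.filter Squarefree, ∏ p ∈ i.primeFactors, hf κ p :=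
        Finset.sum_congr rfl fun i hi => hf_eq_prod κ (Finset.mem_filter.mp hi).2
    _ = ∑ A ∈ (s.filter Squarefree).image Nat.primeFactors, ∏ p ∈ A, hf κ p := by
        refine (Finset.sum_image (g := Nat.primeFactors) (f := fun A => ∏ p ∈ A, hf κ p) ?_).symm
        intro x hx y hy hxy
        have hx' := (Finset.mem_filter.mp hx).2
        have hy' := (Finset.mem_filter.mp hy).2
        rw [← Nat.prod_primeFactors_of_squarefree hx', ← Nat.prod_primeFactors_of_squarefree hy',
          hxy]
    _ ≤ ∑ A ∈ P.powerset, ∏ p ∈ A, hf κ p := by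
        apply Finset.sum_le_sum_of_subset_of_nonneg
        · intro A hA
          rw [Finset.mem_image] at hA
          obtain ⟨c, hc, rfl⟩ := hA
          exact Finset.mem_powerset.mpr (hsub c (Finset.mem_filter.mp hc).1)
        · intro A _ _
          exact Finset.prod_nonneg fun p _ => hf_nonneg κ p
    _ = ∏ p ∈ P, (hf κ p + 1) := by
        rw [Finset.prod_add]
        exact (Finset.sum_congr rfl fun A _ => by simp).symm
    _ ≤ ∏ p ∈ P, Real.exp (hf κ p) :=
        Finset.prod_le_prod (fun p _ => by linarith [hf_nonneg κ p])
          (fun p _ => Real.add_one_le_exp _)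
    _ = Real.exp (∑ p ∈ P, hf κ p) := (Real.exp_sum _ _).symm
    _ ≤ Real.exp (∑' m : ℕ, if m.Prime then hf κ m else 0) := by
        apply Real.exp_le_exp.mpr
        calc ∑ p ∈ P, hf κ p = ∑ p ∈ P, (if p.Prime then hf κ p else 0) :=
              Finset.sum_congr rfl fun p hp => (if_pos (hPprime p hp)).symm
          _ ≤ ∑' m : ℕ, if m.Prime then hf κ m else 0 :=
              Summable.sum_le_tsum P (fun i _ => by split_ifs; exacts [hf_nonneg κ i, le_rfl])
                (summable_pbound κ hκ)

lemma summable_norm_gf (κ : ℕ) (hκ : 2 ≤ κ) (d : ℕ) : Summable fun c => ‖gf κ d c‖ :=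
  Summable.of_nonneg_of_le (fun _ => norm_nonneg _) (fun c => norm_gf_le κ d c)
    (summable_hf κ hκ)

lemma summable_gf (κ : ℕ) (hκ : 2 ≤ κ) (d : ℕ) : Summable (gf κ d) :=
  (summable_norm_gf κ hκ d).of_norm

lemma gf_prime (κ d : ℕ) {p : ℕ} (hp : p.Prime) :
    gf κ d p = if p ∣ d then 0 else tP κ p := by
  unfold gf tP
  by_cases h : p ∣ d
  · rw [if_pos h, if_neg]
    rintro ⟨-, hc⟩
    exact (hp.coprime_iff_not_dvd.mp hc) h
  · rw [if_neg h, if_pos ⟨hp.squarefree, hp.coprime_iff_not_dvd.mpr h⟩, mu_prime hp,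
      Nat.totient_prime hp, Nat.cast_sub hp.one_le, Nat.cast_one]

lemma tsum_pow_gf (κ d : ℕ) {p : ℕ} (hp : p.Prime) :
    ∑' e : ℕ, gf κ d (p ^ e) = 1 + gf κ d p := by
  rw [tsum_eq_sum (s := ({0, 1} : Finset ℕ)) ?_]
  · rw [Finset.sum_pair (by norm_num : (0 : ℕ) ≠ 1), pow_zero, pow_one, gf_one]
  · intro e he
    simp only [Finset.mem_insert, Finset.mem_singleton] at he
    push_neg at he
    unfold gf
    rw [if_neg]
    rintro ⟨hsq, -⟩
    rw [Nat.squarefree_pow_iff hp.ne_one he.1] at hsq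
    exact he.2 hsq.2

lemma euler_gf (κ : ℕ) (hκ : 2 ≤ κ) (d : ℕ) :
    HasProd (fun p : Nat.Primes => 1 + gf κ d p.1) (∑' c, gf κ d c) := by
  have h := EulerProduct.eulerProduct_hasProd (f := gf κ d) (gf_one κ d)
    (fun {m n} h => gf_mul κ d h) (summable_norm_gf κ hκ d) (gf_zero κ d)
  have he : (fun p : Nat.Primes => 1 + gf κ d p.1)
      = fun p : Nat.Primes => ∑' e : ℕ, gf κ d (p.1 ^ e) :=
    funext fun p => (tsum_pow_gf κ d p.2).symm
  rw [he]
  exact h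


/-- the divisor-side Euler factor -/
def uP (κ p : ℕ) : ℝ := (-1 : ℝ) ^ κ * p / ((p : ℝ) - 1) ^ κ

lemma mval_one (κ : ℕ) : mval κ 1 = 1 := by simp [mval, mu_one]

lemma mval_mul (κ : ℕ) {m n : ℕ} (h : m.Coprime n) :
    mval κ (m * n) = mval κ m * mval κ n := by
  unfold mval
  rw [mu_mul h, Nat.totient_mul h, Nat.cast_mul, Nat.cast_mul, mul_pow, mul_pow,
    div_eq_mul_inv, div_eq_mul_inv, div_eq_mul_inv, mul_inv]
  ring

lemma mval_prime (κ : ℕ) {p : ℕ} (hp : p.Prime) : mval κ p = uP κ p := by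
  unfold mval uP
  rw [mu_prime hp, Nat.totient_prime hp, Nat.cast_sub hp.one_le, Nat.cast_one]

lemma mval_eq_prod (κ : ℕ) {d : ℕ} (hd : Squarefree d) :
    mval κ d = ∏ p ∈ d.primeFactors, uP κ p := by
  have h := map_prod_primes (mval κ) (mval_one κ) (fun m n h => mval_mul κ h) d.primeFactors
    (fun p hp => Nat.prime_of_mem_primeFactors hp)
  rw [Nat.prod_primeFactors_of_squarefree hd] at h
  rw [h]
  exact Finset.prod_congr rfl fun p hp => mval_prime κ (Nat.prime_of_mem_primeFactors hp)

lemma euler_factor (κ : ℕ) (hκ : 2 ≤ κ) {p : ℕ} (hp : p.Prime) :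
    uP κ p + (1 + tP κ p) = 1 + (-1 : ℝ) ^ κ / ((p : ℝ) - 1) ^ (κ - 1) := by
  obtain ⟨k, rfl⟩ : ∃ k, κ = k + 1 := ⟨κ - 1, by omega⟩
  have hp2 : (2 : ℝ) ≤ p := by exact_mod_cast hp.two_le
  have hx : ((p : ℝ) - 1) ≠ 0 := by linarith
  unfold uP tP
  simp only [Nat.add_sub_cancel]
  field_simp
  ring

end SS8

theorem statement8 (κ N : ℕ) (hκ : 2 ≤ κ) (hN : 1 ≤ N) :
    (∀ d ∈ N.divisors, Summable (sTerm₁ κ d)) ∧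
      singularSeries κ N = ∑ d ∈ N.divisors, ∑' c : ℕ, sTerm₁ κ d c := by
  classical
  have hN0 : N ≠ 0 := by omega
  have hdecomp : ∀ d : ℕ, sTerm₁ κ d = fun c => SS8.mval κ d * SS8.gf κ d c := by
    intro d
    funext c
    unfold sTerm₁ SS8.mval SS8.gf
    by_cases h1 : 1 ≤ c ∧ Nat.gcd c d = 1
    · rw [if_pos h1]
      by_cases h2 : Squarefree c
      · rw [if_pos ⟨h2, h1.2⟩, div_eq_mul_inv, div_eq_mul_inv, div_eq_mul_inv, mul_inv]
        ring
      · rw [if_neg (fun hh => h2 hh.1), SS8.mu_eq_zero h2,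
          zero_pow (Nat.succ_ne_zero κ)]
        simp
    · rw [if_neg h1, if_neg, mul_zero]
      rintro ⟨hs, hc⟩
      exact h1 ⟨Nat.one_le_iff_ne_zero.mpr hs.ne_zero, hc⟩
  refine ⟨fun d _ => by rw [hdecomp d]; exact (SS8.summable_gf κ hκ d).mul_left _, ?_⟩
  set HH : Nat.Primes → ℝ := fun p => if p.1 ∣ N then 1 else 1 + SS8.tP κ p.1 with hHHdef
  have hHHeq : HH = fun p : Nat.Primes => 1 + SS8.gf κ N p.1 := by
    funext p
    rw [hHHdef]
    simp only []
    rw [SS8.gf_prime κ N p.2]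
    split_ifs with h
    · norm_num
    · rfl
  have hHH : HasProd HH (∑' c, SS8.gf κ N c) := by
    rw [hHHeq]; exact SS8.euler_gf κ hκ N
  have hHHm : Multipliable HH := hHH.multipliable
  have hCeq : ∏' p, HH p
      = ∏' p : {p : ℕ // p.Prime ∧ ¬(p ∣ N)},
          (1 + (-1 : ℝ) ^ (κ + 1) / (((p : ℕ) : ℝ) - 1) ^ κ) := by
    have hsupp : Function.mulSupport HH ⊆ {p : Nat.Primes | ¬(p.1 ∣ N)} := by
      intro p hp hdvd
      exact hp (if_pos hdvd)
    rw [← tprod_subtype_eq_of_mulSupport_subset hsupp,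
      ← Equiv.tprod_eq (⟨fun q => ⟨⟨q.1, q.2.1⟩, q.2.2⟩, fun x => ⟨x.1.1, x.1.2, x.2⟩,
          fun q => rfl, fun x => rfl⟩ :
          {p : ℕ // p.Prime ∧ ¬(p ∣ N)} ≃ {p : Nat.Primes | ¬(p.1 ∣ N)})
        (fun x : {p : Nat.Primes | ¬(p.1 ∣ N)} => HH x.1)]
    refine tprod_congr fun q => ?_
    rw [hHHdef]
    simp only [Equiv.coe_fn_mk]
    show (if q.1 ∣ N then (1 : ℝ) else 1 + SS8.tP κ q.1) = _
    rw [if_neg q.2.2]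
    rfl
  have key : ∀ d ∈ N.divisors, ∑' c, SS8.gf κ d c
      = (∏ p ∈ N.primeFactors, (1 + if p ∣ d then 0 else SS8.tP κ p)) * ∏' p, HH p := by
    intro d hd
    have hdvd : d ∣ N := (Nat.mem_divisors.mp hd).1
    set GG : Nat.Primes → ℝ :=
      fun p => if p.1 ∣ N then 1 + (if p.1 ∣ d then 0 else SS8.tP κ p.1) else 1 with hGGdef
    set S : Finset Nat.Primes := N.primeFactors.attach.map
      ⟨fun x => ⟨x.1, Nat.prime_of_mem_primeFactors x.2⟩,
        fun a b hab => by exact Subtype.ext (congrArg (Subtype.val : Nat.Primes → ℕ) hab)⟩ with hSdef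
    have hGGone : ∀ p ∉ S, GG p = 1 := by
      intro p hp
      rw [hGGdef]
      simp only []
      rw [if_neg]
      intro hdN
      apply hp
      rw [hSdef]
      simp only [Finset.mem_map, Function.Embedding.coeFn_mk]
      exact ⟨⟨p.1, Nat.mem_primeFactors.mpr ⟨p.2, hdN, hN0⟩⟩, Finset.mem_attach _ _, rfl⟩
    have hGGprod : HasProd GG (∏ x ∈ S, GG x) := hasProd_prod_of_ne_finset_one hGGone
    have hFF : (fun p : Nat.Primes => 1 + SS8.gf κ d p.1) = fun p => GG p * HH p := by
      funext p
      rw [SS8.gf_prime κ d p.2, hGGdef, hHHdef]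
      simp only []
      by_cases h : p.1 ∣ N
      · rw [if_pos h, if_pos h, mul_one]
      · have hnd : ¬ p.1 ∣ d := fun hh => h (hh.trans hdvd)
        rw [if_neg h, if_neg h, if_neg hnd, one_mul]
    have heuler := SS8.euler_gf κ hκ d
    rw [hFF] at heuler
    have hprod2 : HasProd (fun p => GG p * HH p) ((∏ x ∈ S, GG x) * ∏' p, HH p) :=
      hGGprod.mul hHHm.hasProd
    rw [heuler.unique hprod2]
    congr 1
    have hbody : ∀ x : {x // x ∈ N.primeFactors},
        GG ⟨x.1, Nat.prime_of_mem_primeFactors x.2⟩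
          = 1 + (if x.1 ∣ d then 0 else SS8.tP κ x.1) := by
      intro x
      rw [hGGdef]
      simp only []
      rw [if_pos (Nat.dvd_of_mem_primeFactors x.2)]
    calc ∏ x ∈ S, GG x
        = ∏ x ∈ N.primeFactors.attach, (1 + if x.1 ∣ d then 0 else SS8.tP κ x.1) := by
          rw [hSdef, Finset.prod_map]
          exact Finset.prod_congr rfl fun x _ => hbody x
      _ = ∏ p ∈ N.primeFactors, (1 + if p ∣ d then 0 else SS8.tP κ p) :=
          Finset.prod_attach N.primeFactors (fun p => 1 + if p ∣ d then 0 else SS8.tP κ p)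
  have hmain : ∑ d ∈ N.divisors, ∑' c, sTerm₁ κ d c
      = (∑ d ∈ N.divisors, SS8.mval κ d *
          ∏ p ∈ N.primeFactors, (1 + if p ∣ d then 0 else SS8.tP κ p)) * ∏' p, HH p := by
    rw [Finset.sum_mul]
    refine Finset.sum_congr rfl fun d hd => ?_
    rw [hdecomp d, Summable.tsum_mul_left _ (SS8.summable_gf κ hκ d), key d hd, mul_assoc]
  rw [hmain, singularSeries, ← hCeq]
  congr 1
  have hne : ∀ d ∈ N.divisors,
      (SS8.mval κ d * ∏ p ∈ N.primeFactors, (1 + if p ∣ d then 0 else SS8.tP κ p)) ≠ 0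
        → Squarefree d := by
    intro d _ hd
    by_contra h
    apply hd
    unfold SS8.mval
    rw [SS8.mu_eq_zero h, zero_pow (by omega : κ ≠ 0), zero_mul, zero_div, zero_mul]
  rw [← Finset.sum_filter_of_ne hne]
  rw [Finset.sum_bij' (i := fun d _ => d.primeFactors)
    (j := fun A _ => ∏ p ∈ A, p)
    (t := N.primeFactors.powerset)
    (g := fun A => (∏ p ∈ A, SS8.uP κ p) * ∏ p ∈ N.primeFactors \ A, (1 + SS8.tP κ p))
    ?hi ?hj ?hji ?hij ?hval]
  case hi =>
    intro d hd
    have hd1 := (Finset.mem_filter.mp hd).1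
    exact Finset.mem_powerset.mpr
      (Nat.primeFactors_mono (Nat.mem_divisors.mp hd1).1 hN0)
  case hj =>
    intro A hA
    have hA' := Finset.mem_powerset.mp hA
    have hpr : ∀ p ∈ A, Nat.Prime p := fun p hp => Nat.prime_of_mem_primeFactors (hA' hp)
    refine Finset.mem_filter.mpr ⟨Nat.mem_divisors.mpr ⟨?_, hN0⟩,
      SS8.squarefree_prod_primes A hpr⟩
    exact Finset.prod_primes_dvd N (fun p hp => (hpr p hp).prime)
      (fun p hp => Nat.dvd_of_mem_primeFactors (hA' hp))
  case hji =>
    intro d hd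
    exact Nat.prod_primeFactors_of_squarefree (Finset.mem_filter.mp hd).2
  case hij =>
    intro A hA
    exact Nat.primeFactors_prod
      (fun p hp => Nat.prime_of_mem_primeFactors (Finset.mem_powerset.mp hA hp))
  case hval =>
    intro d hd
    obtain ⟨hd1, hsf⟩ := Finset.mem_filter.mp hd
    have hdvd := (Nat.mem_divisors.mp hd1).1
    have hA : d.primeFactors ⊆ N.primeFactors := Nat.primeFactors_mono hdvd hN0
    rw [SS8.mval_eq_prod κ hsf]
    congr 1
    rw [← Finset.prod_sdiff hA,
      show ∏ p ∈ d.primeFactors, (1 + if p ∣ d then 0 else SS8.tP κ p) = 1 from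
        Finset.prod_eq_one fun p hp => by
          rw [if_pos (Nat.dvd_of_mem_primeFactors hp)]; ring,
      mul_one]
    refine Finset.prod_congr rfl fun p hp => ?_
    rw [if_neg]
    intro hpd
    exact (Finset.mem_sdiff.mp hp).2 (Nat.mem_primeFactors.mpr
      ⟨Nat.prime_of_mem_primeFactors (Finset.mem_sdiff.mp hp).1, hpd, hsf.ne_zero⟩)
  rw [← Finset.prod_add]
  exact Finset.prod_congr rfl fun p hp =>
    (SS8.euler_factor κ hκ (Nat.prime_of_mem_primeFactors hp)).symm


end
end

section
/- Let α, β ∈ ℝ with α > 1, and let κ be a positive integer with κ < α. If N is a positive integer whose fractional part {(N − κβ)α^{-1}} lies in the open interval (0, 1 − κα^{-1}), then N cannot be written in the form N = ⌊αm₁ + β⌋ + ⌊αm₂ + β⌋ + ⋯ + ⌊αm_κ + β⌋ with m₁, …, m_κ ∈ ℕ. In particular, such N is not a sum of κ elements of the Beatty sequence B_{α,β}. -/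
open scoped BigOperators

noncomputable section

theorem statement12 (α β : ℝ) (hα : 1 < α) (κ : ℕ) (hκ : 0 < κ) (hκα : (κ : ℝ) < α)
    (N : ℕ) (hN : 0 < N)
    (hfrac : Int.fract (((N : ℝ) - κ * β) * α⁻¹) ∈ Set.Ioo 0 (1 - κ * α⁻¹)) :
    ¬ ∃ m : Fin κ → ℕ, (∀ i, 1 ≤ m i) ∧ (N : ℤ) = ∑ i, ⌊α * (m i : ℝ) + β⌋ := by
  rintro ⟨m, _, hsum⟩
  have hα0 : (0:ℝ) < α := lt_trans one_pos hα
  set S : ℝ := ∑ i, Int.fract (α * (m i : ℝ) + β) with hSdef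
  have hS0 : 0 ≤ S := Finset.sum_nonneg fun i _ => Int.fract_nonneg _
  have hSκ : S < κ := by
    have : S < ∑ _i : Fin κ, (1:ℝ) :=
      Finset.sum_lt_sum_of_nonempty ⟨⟨0, hκ⟩, Finset.mem_univ _⟩
        (fun i _ => Int.fract_lt_one _)
    simpa using this
  set M : ℕ := ∑ i, m i with hMdef
  have hNreal : (N:ℝ) = α * (M:ℝ) + κ * β - S := by
    have h1 : (N:ℝ) = ∑ i, ((⌊α * (m i : ℝ) + β⌋ : ℤ) : ℝ) := by
      exact_mod_cast hsum
    rw [h1]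
    have h2 : ∀ i : Fin κ, ((⌊α * (m i : ℝ) + β⌋ : ℤ) : ℝ)
        = α * (m i : ℝ) + β - Int.fract (α * (m i : ℝ) + β) := by
      intro i; rw [Int.fract]; ring
    rw [Finset.sum_congr rfl fun i _ => h2 i, Finset.sum_sub_distrib]
    rw [hSdef, hMdef]
    push_cast
    rw [Finset.sum_add_distrib, ← Finset.mul_sum]
    simp [mul_comm]
  have hx : ((N : ℝ) - κ * β) * α⁻¹ = (M:ℝ) + (-(S * α⁻¹)) := by
    rw [hNreal]; field_simp; ring
  have hκα1 : (κ:ℝ) * α⁻¹ < 1 := by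
    rw [← div_eq_mul_inv]
    exact (div_lt_one hα0).mpr hκα
  rcases eq_or_lt_of_le hS0 with h | h
  · -- S = 0 case: fract = 0
    have hfr : Int.fract (((N : ℝ) - κ * β) * α⁻¹) = 0 := by
      rw [hx, ← h]
      simp
    have := hfrac.1
    rw [hfr] at this
    exact lt_irrefl _ this
  · -- 0 < S case: fract = 1 - S/α > 1 - κ/α
    have h2 : S * α⁻¹ < κ * α⁻¹ := mul_lt_mul_of_pos_right hSκ (inv_pos.mpr hα0)
    have hSpos : 0 < S * α⁻¹ := mul_pos h (inv_pos.mpr hα0)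
    have hlt1 : S * α⁻¹ < 1 := lt_trans h2 hκα1
    have hfr : Int.fract (((N : ℝ) - κ * β) * α⁻¹) = 1 - S * α⁻¹ := by
      rw [hx]
      have : Int.fract ((M:ℝ) + (-(S * α⁻¹))) = Int.fract (-(S * α⁻¹)) := by
        have := Int.fract_intCast_add (M:ℤ) (-(S * α⁻¹))
        simpa using this
      rw [this, Int.fract]
      have hfl : ⌊-(S * α⁻¹)⌋ = -1 := by
        apply Int.floor_eq_iff.mpr
        constructor
        · push_cast; linarith
        · push_cast; linarith
      rw [hfl]; push_cast; ring
    have := hfrac.2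
    rw [hfr] at this
    linarith

end
end

section
/- Let α > 1 be irrational and put γ = α^{-1} ∈ (0,1). If κ ≥ ⌈α⌉ (the least integer ≥ α), then there exists a constant c > 0, depending only on α and κ, such that ψ^{(κ)}(x) ≥ c for all x ∈ ℝ. -/
open scoped BigOperators

noncomputable section

open MeasureTheory

lemma psi_nonneg (γ x : ℝ) : 0 ≤ psi γ x := by
  unfold psi; split_ifs <;> norm_num

lemma psi_le_one (γ x : ℝ) : psi γ x ≤ 1 := by
  unfold psi; split_ifs <;> norm_num

lemma psi_measurable (γ : ℝ) : Measurable (psi γ) := by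
  unfold psi
  have h : MeasurableSet {x : ℝ | 0 < Int.fract x ∧ Int.fract x ≤ γ} := by
    have : {x : ℝ | 0 < Int.fract x ∧ Int.fract x ≤ γ} = Int.fract ⁻¹' (Set.Ioc 0 γ) := rfl
    rw [this]
    exact measurable_fract measurableSet_Ioc
  exact Measurable.ite h measurable_const measurable_const

lemma psiConv_measurable (γ : ℝ) : ∀ k, Measurable (psiConv γ k)
  | 0 => measurable_const
  | 1 => psi_measurable γ
  | (k+2) => by
    have hf := psiConv_measurable γ (k+1)
    have hF : Measurable fun p : ℝ × ℝ => psiConv γ (k+1) (p.1 - p.2) * psi γ p.2 :=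
      (hf.comp (measurable_fst.sub measurable_snd)).mul ((psi_measurable γ).comp measurable_snd)
    have key : Measurable fun x : ℝ =>
        ∫ y, psiConv γ (k+1) (x - y) * psi γ y ∂(volume.restrict (Set.Ioc 0 1)) :=
      (hF.stronglyMeasurable.integral_prod_right').measurable
    have heq : (fun x : ℝ => ∫ y in (0:ℝ)..1, psiConv γ (k+1) (x - y) * psi γ y)
        = fun x => ∫ y, psiConv γ (k+1) (x - y) * psi γ y ∂(volume.restrict (Set.Ioc 0 1)) := by
      funext x
      rw [intervalIntegral.integral_of_le (by norm_num : (0:ℝ) ≤ 1)]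
    show Measurable fun x : ℝ => ∫ y in (0:ℝ)..1, psiConv γ (k+1) (x - y) * psi γ y
    rw [heq]
    exact key

lemma psiConv_nonneg (γ : ℝ) : ∀ k, ∀ x, 0 ≤ psiConv γ k x
  | 0, x => le_refl 0
  | 1, x => psi_nonneg γ x
  | (k+2), x => by
    apply intervalIntegral.integral_nonneg (by norm_num : (0:ℝ) ≤ 1)
    intro y _
    exact mul_nonneg (psiConv_nonneg γ (k+1) _) (psi_nonneg γ y)

lemma integrable_step (γ : ℝ) {f : ℝ → ℝ} (hf : Measurable f)
    (h0 : ∀ z, 0 ≤ f z) (h1 : ∀ z, f z ≤ 1) (x : ℝ) :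
    IntervalIntegrable (fun y => f (x - y) * psi γ y) volume 0 1 := by
  have hm : Measurable fun y : ℝ => f (x - y) * psi γ y :=
    (hf.comp (measurable_const.sub measurable_id)).mul (psi_measurable γ)
  rw [intervalIntegrable_iff]
  have hfin : IsFiniteMeasure (volume.restrict (Set.uIoc (0:ℝ) 1)) := by
    constructor
    rw [Measure.restrict_apply_univ, Set.uIoc_of_le (by norm_num : (0:ℝ) ≤ 1)]
    simp
  refine ⟨hm.aestronglyMeasurable, ?_⟩
  apply MeasureTheory.HasFiniteIntegral.of_bounded (C := 1)
  filter_upwards with y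
  rw [Real.norm_eq_abs, abs_of_nonneg (mul_nonneg (h0 _) (psi_nonneg _ _))]
  exact mul_le_one₀ (h1 _) (psi_nonneg _ _) (psi_le_one _ _)

lemma psiConv_le_one (γ : ℝ) : ∀ k, ∀ x, psiConv γ k x ≤ 1
  | 0, x => zero_le_one
  | 1, x => psi_le_one γ x
  | (k+2), x => by
    have hint := integrable_step γ (psiConv_measurable γ (k+1)) (psiConv_nonneg γ (k+1))
      (psiConv_le_one γ (k+1)) x
    show (∫ y in (0:ℝ)..1, psiConv γ (k+1) (x - y) * psi γ y) ≤ 1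
    calc (∫ y in (0:ℝ)..1, psiConv γ (k+1) (x - y) * psi γ y)
        ≤ ∫ _y in (0:ℝ)..1, (1:ℝ) := by
          apply intervalIntegral.integral_mono_on (by norm_num) hint intervalIntegrable_const
          intro y _
          exact mul_le_one₀ (psiConv_le_one γ (k+1) _) (psi_nonneg _ _) (psi_le_one _ _)
      _ = 1 := by simp

lemma conv_lower (γ : ℝ) {f : ℝ → ℝ} (hf : Measurable f)
    (h0 : ∀ z, 0 ≤ f z) (h1 : ∀ z, f z ≤ 1) (x l u c : ℝ)
    (h0l : 0 ≤ l) (hlu : l ≤ u) (hu1 : u ≤ 1) (hc : 0 ≤ c)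
    (hpt : ∀ y ∈ Set.Ioo l u, c ≤ f (x - y) * psi γ y) :
    c * (u - l) ≤ ∫ y in (0:ℝ)..1, f (x - y) * psi γ y := by
  set g := fun y : ℝ => f (x - y) * psi γ y with hg
  have hg0 : ∀ y, 0 ≤ g y := fun y => mul_nonneg (h0 _) (psi_nonneg _ _)
  have hint : IntervalIntegrable g volume 0 1 := integrable_step γ hf h0 h1 x
  have hmem : ∀ z : ℝ, 0 ≤ z → z ≤ 1 → z ∈ Set.uIcc (0:ℝ) 1 := by
    intro z h h'
    rw [Set.uIcc_of_le (by norm_num : (0:ℝ) ≤ 1)]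
    exact ⟨h, h'⟩
  have hil : IntervalIntegrable g volume 0 l :=
    hint.mono_set (Set.uIcc_subset_uIcc (hmem 0 le_rfl zero_le_one) (hmem l h0l (hlu.trans hu1)))
  have hlu' : IntervalIntegrable g volume l u :=
    hint.mono_set (Set.uIcc_subset_uIcc (hmem l h0l (hlu.trans hu1)) (hmem u (h0l.trans hlu) hu1))
  have hu1' : IntervalIntegrable g volume u 1 :=
    hint.mono_set (Set.uIcc_subset_uIcc (hmem u (h0l.trans hlu) hu1) (hmem 1 zero_le_one le_rfl))
  have e1 : (∫ y in (0:ℝ)..l, g y) + (∫ y in l..u, g y) = ∫ y in (0:ℝ)..u, g y :=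
    intervalIntegral.integral_add_adjacent_intervals hil hlu'
  have e2 : (∫ y in (0:ℝ)..u, g y) + (∫ y in u..(1:ℝ), g y) = ∫ y in (0:ℝ)..1, g y :=
    intervalIntegral.integral_add_adjacent_intervals (hil.trans hlu') hu1'
  have h2 : 0 ≤ ∫ y in (0:ℝ)..l, g y :=
    intervalIntegral.integral_nonneg h0l (fun y _ => hg0 y)
  have h3 : 0 ≤ ∫ y in u..(1:ℝ), g y :=
    intervalIntegral.integral_nonneg hu1 (fun y _ => hg0 y)
  have h4 : c * (u - l) ≤ ∫ y in l..u, g y := by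
    have hnull : volume ({l, u} : Set ℝ) = 0 := by
      have : ({l, u} : Set ℝ) = {l} ∪ {u} := rfl
      rw [this]
      exact measure_union_null Real.volume_singleton Real.volume_singleton
    have hae : ∀ᵐ y ∂(volume : Measure ℝ), y ∉ ({l, u} : Set ℝ) :=
      measure_eq_zero_iff_ae_notMem.mp hnull
    have hle : (fun _ : ℝ => c) ≤ᵐ[volume.restrict (Set.Icc l u)] g := by
      have h5 := ae_restrict_mem (μ := volume) (measurableSet_Icc : MeasurableSet (Set.Icc l u))
      have h6 := ae_restrict_of_ae (μ := volume) (s := Set.Icc l u) hae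
      filter_upwards [h5, h6] with y hy hy'
      have hyl : y ≠ l := fun h => hy' (by simp [h])
      have hyu : y ≠ u := fun h => hy' (by simp [h])
      exact hpt y ⟨lt_of_le_of_ne hy.1 (Ne.symm hyl), lt_of_le_of_ne hy.2 hyu⟩
    calc c * (u - l) = ∫ _y in l..u, c := by
          rw [intervalIntegral.integral_const, smul_eq_mul, mul_comm]
      _ ≤ ∫ y in l..u, g y :=
          intervalIntegral.integral_mono_ae_restrict hlu intervalIntegrable_const hlu' hle
  linarith

lemma fract_x_sub {x y : ℝ} (h0 : 0 < y) (h : y < Int.fract x) :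
    Int.fract (x - y) = Int.fract x - y := by
  have h1 : x - y = (Int.fract x - y) + (⌊x⌋ : ℝ) := by rw [Int.fract]; ring
  rw [h1, Int.fract_add_intCast]
  refine Int.fract_eq_self.mpr ⟨by linarith, ?_⟩
  have := Int.fract_lt_one x
  linarith

lemma fract_x_sub' {x y : ℝ} (h : Int.fract x < y) (h1 : y < 1) :
    Int.fract (x - y) = Int.fract x - y + 1 := by
  have h2 : x - y = (Int.fract x - y + 1) + ((⌊x⌋ - 1 : ℤ) : ℝ) := by
    push_cast
    rw [Int.fract]; ring
  rw [h2, Int.fract_add_intCast]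
  refine Int.fract_eq_self.mpr ⟨?_, by linarith⟩
  have := Int.fract_nonneg x
  linarith

lemma key_induction (γ : ℝ) (hγ0 : 0 < γ) (hγ1 : γ < 1) {δ : ℝ} (hδ0 : 0 < δ)
    (hδγ : 3 * δ ≤ γ) :
    ∀ k : ℕ, ∀ x : ℝ, ((k:ℝ)+1) * δ < Int.fract x →
      Int.fract x < min (((k:ℝ)+1) * (γ - δ)) 1 → δ ^ k ≤ psiConv γ (k+1) x := by
  intro k
  induction k with
  | zero =>
    intro x h1 h2
    simp only [Nat.cast_zero, zero_add, one_mul] at h1 h2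
    have hle : Int.fract x ≤ γ := by
      have : Int.fract x < γ - δ := lt_of_lt_of_le h2 (min_le_left _ _)
      linarith
    have hpos : 0 < Int.fract x := by linarith
    show (1:ℝ) ≤ psi γ x
    rw [psi, if_pos ⟨hpos, hle⟩]
  | succ k IH =>
    intro x h1 h2
    push_cast at h1 h2
    set t := Int.fract x with ht
    set a := ((k:ℝ)+1)*δ with ha
    set b := min (((k:ℝ)+1)*(γ-δ)) 1 with hb
    set l := max 0 (t - b) with hl
    set u := min (t - a) γ with hu
    have hk0 : (0:ℝ) ≤ (k:ℝ) := Nat.cast_nonneg k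
    have hblt1 : b ≤ 1 := min_le_right _ _
    have ht1 : t < 1 := Int.fract_lt_one x
    have ht0 : 0 ≤ t := Int.fract_nonneg x
    have hta : a + δ < t := by linarith
    have h0l : 0 ≤ l := le_max_left _ _
    have huγ : u ≤ γ := min_le_right _ _
    have hu1 : u ≤ 1 := huγ.trans hγ1.le
    have hlen : δ ≤ u - l := by
      rcases le_or_gt t b with hcase | hcase
      · have hle : l = 0 := max_eq_left (by linarith)
        have h5 : δ ≤ u := le_min (by linarith) (by linarith)
        rw [hle]; linarith
      · have hle : l = t - b := max_eq_right (by linarith)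
        have hblt : b = ((k:ℝ)+1)*(γ-δ) := by
          rcases min_cases (((k:ℝ)+1)*(γ-δ)) 1 with ⟨h, _⟩ | ⟨h, hgt⟩
          · rw [hb]; exact h
          · exfalso
            have hb1 : b = 1 := by rw [hb]; exact h
            rw [hb1] at hcase; linarith
        have h2' : t < ((k:ℝ)+2)*(γ-δ) :=
          lt_of_lt_of_le h2 (by
            calc min (((k:ℝ)+1+1)*(γ-δ)) 1 ≤ ((k:ℝ)+1+1)*(γ-δ) := min_le_left _ _
              _ = ((k:ℝ)+2)*(γ-δ) := by ring)
        rcases min_cases (t - a) γ with ⟨hueq, hle2⟩ | ⟨hueq, hlt2⟩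
        · have hueq' : u = t - a := by rw [hu]; exact hueq
          rw [hueq', hle, hblt, ha]; nlinarith
        · have hueq' : u = γ := by rw [hu]; exact hueq
          rw [hueq', hle, hblt]; nlinarith
    have hlu : l ≤ u := by linarith
    have hpt : ∀ y ∈ Set.Ioo l u, δ ^ k ≤ psiConv γ (k+1) (x - y) * psi γ y := by
      intro y hy
      have hy0 : 0 < y := lt_of_le_of_lt h0l hy.1
      have hyγ : y < γ := lt_of_lt_of_le hy.2 huγ
      have hyu : y < t - a := lt_of_lt_of_le hy.2 (min_le_left _ _)
      have hylb : t - b < y := lt_of_le_of_lt (le_max_right 0 (t - b)) hy.1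
      have hyt : y < t := by
        have : 0 < a := by positivity
        linarith
      have hfr : Int.fract (x - y) = t - y := fract_x_sub hy0 hyt
      have hfy : Int.fract y = y := Int.fract_eq_self.mpr ⟨hy0.le, hyγ.trans hγ1⟩
      have hpsiy : psi γ y = 1 := by rw [psi, hfy, if_pos ⟨hy0, hyγ.le⟩]
      have hIH : δ ^ k ≤ psiConv γ (k+1) (x - y) := by
        apply IH (x - y)
        · rw [hfr]; linarith
        · rw [hfr]; linarith
      calc δ ^ k ≤ psiConv γ (k+1) (x - y) := hIH
        _ = psiConv γ (k+1) (x - y) * psi γ y := by rw [hpsiy, mul_one]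
    have hfinal := conv_lower γ (psiConv_measurable γ (k+1)) (psiConv_nonneg γ (k+1))
      (psiConv_le_one γ (k+1)) x l u (δ ^ k) h0l hlu hu1 (pow_nonneg hδ0.le k) hpt
    have heq : psiConv γ (k+2) x = ∫ y in (0:ℝ)..1, psiConv γ (k+1) (x - y) * psi γ y := rfl
    calc δ ^ (k+1) = δ ^ k * δ := by ring
      _ ≤ δ ^ k * (u - l) := by
          apply mul_le_mul_of_nonneg_left hlen (pow_nonneg hδ0.le k)
      _ ≤ ∫ y in (0:ℝ)..1, psiConv γ (k+1) (x - y) * psi γ y := hfinal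
      _ = psiConv γ (k+2) x := heq.symm


set_option maxHeartbeats 1600000 in
theorem statement13 (α : ℝ) (hα : 1 < α) (hirr : Irrational α)
    (κ : ℕ) (hκ : ⌈α⌉₊ ≤ κ) :
    ∃ c : ℝ, 0 < c ∧ ∀ x : ℝ, c ≤ psiConv α⁻¹ κ x := by
  have hα0 : 0 < α := lt_trans one_pos hα
  set γ := α⁻¹ with hγ
  have hγ0 : 0 < γ := inv_pos.mpr hα0
  have hγ1 : γ < 1 := inv_lt_one_of_one_lt₀ hα
  have hκ2 : 2 ≤ κ := le_trans (by
    have : (1:ℕ) < ⌈α⌉₊ := Nat.lt_ceil.mpr (by exact_mod_cast hα)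
    omega) hκ
  obtain ⟨m, rfl⟩ : ∃ m, κ = m + 2 := ⟨κ - 2, by omega⟩
  set K : ℝ := (m:ℝ) + 2 with hK
  have hK0 : (0:ℝ) < K := by positivity
  have hK2 : (2:ℝ) ≤ K := by
    have : (0:ℝ) ≤ (m:ℝ) := Nat.cast_nonneg m
    linarith
  have hακ : α < K := by
    have h1 : α ≤ (⌈α⌉₊ : ℝ) := Nat.le_ceil α
    have h2 : α ≠ (⌈α⌉₊ : ℝ) := hirr.ne_nat _
    have h3 : ((⌈α⌉₊ : ℕ) : ℝ) ≤ K := by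
      rw [hK]
      exact_mod_cast Nat.cast_le.mpr hκ
    exact lt_of_lt_of_le (lt_of_le_of_ne h1 h2) h3
  have hαγ : α * γ = 1 := mul_inv_cancel₀ hα0.ne'
  have hKγ : 1 < K * γ := by
    linarith only [mul_pos (sub_pos.mpr hακ) hγ0, hαγ]
  set E : ℝ := K * γ - 1 with hE
  have hE0 : 0 < E := by linarith only [hKγ, hE]
  set δ : ℝ := min (γ/(2*K)) (min ((1-γ)/K) (E/(4*K))) with hδ
  have hδ0 : 0 < δ :=
    lt_min (div_pos hγ0 (by positivity))
      (lt_min (div_pos (by linarith) hK0) (div_pos hE0 (by positivity)))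
  have hδ1 : δ * (2*K) ≤ γ :=
    (le_div_iff₀ (by positivity)).mp (min_le_left _ _)
  have hδ2 : δ * K ≤ 1 - γ :=
    (le_div_iff₀ hK0).mp (le_trans (min_le_right _ _) (min_le_left _ _))
  have hδ3 : δ * (4*K) ≤ E :=
    (le_div_iff₀ (by positivity)).mp (le_trans (min_le_right _ _) (min_le_right _ _))
  have h2K : δ * 2 ≤ δ * K := mul_le_mul_of_nonneg_left hK2 hδ0.le
  have h3δ : 3 * δ ≤ γ := by linarith only [h2K, hδ1, hδ0]
  set c2 : ℝ := min δ (min (γ/2) (E/2)) with hc2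
  have hc20 : 0 < c2 := lt_min hδ0 (lt_min (by positivity) (by positivity))
  have hc2δ : c2 ≤ δ := min_le_left _ _
  have hc2γ : c2 ≤ γ/2 := le_trans (min_le_right _ _) (min_le_left _ _)
  have hc2E : c2 ≤ E/2 := le_trans (min_le_right _ _) (min_le_right _ _)
  have hKδ : ((m:ℝ)+1)*δ + δ = K * δ := by rw [hK]; ring
  have hmδ : ((m:ℝ)+1) * δ ≤ K * δ :=
    mul_le_mul_of_nonneg_right (by rw [hK]; linarith) hδ0.le
  have hbE : γ + ((m:ℝ)+1)*(γ-δ) - 1 = E - ((m:ℝ)+1)*δ := by rw [hE, hK]; ring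
  have hm0 : (0:ℝ) ≤ (m:ℝ) := Nat.cast_nonneg m
  clear_value γ K E δ c2
  refine ⟨δ ^ m * c2, mul_pos (pow_pos hδ0 m) hc20, ?_⟩
  intro x
  set t := Int.fract x with ht
  set a := ((m:ℝ)+1)*δ with ha
  set b := min (((m:ℝ)+1)*(γ-δ)) 1 with hb
  have ht0 : 0 ≤ t := Int.fract_nonneg x
  have ht1 : t < 1 := Int.fract_lt_one x
  have hb1 : b ≤ 1 := min_le_right _ _
  have haδK : a + δ = K * δ := by rw [ha]; exact hKδ
  have haK : a ≤ K * δ := by linarith only [haδK, hδ0]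
  have haγ : γ ≤ 1 - a := by linarith only [hδ2, haK]
  have hapos : 0 < a := by
    rw [ha]
    have : (0:ℝ) < (m:ℝ) + 1 := by linarith only [hm0]
    exact mul_pos this hδ0
  clear_value t a b
  have main : ∀ l u : ℝ, 0 ≤ l → u ≤ 1 → c2 ≤ u - l →
      (∀ y ∈ Set.Ioo l u, δ ^ m ≤ psiConv γ (m+1) (x - y) * psi γ y) →
      δ ^ m * c2 ≤ psiConv γ (m+2) x := by
    intro l u h0l hu1 hlen hpt
    have hlu : l ≤ u := by linarith only [hlen, hc20]
    have hfin := conv_lower γ (psiConv_measurable γ (m+1)) (psiConv_nonneg γ (m+1))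
      (psiConv_le_one γ (m+1)) x l u (δ ^ m) h0l hlu hu1 (pow_nonneg hδ0.le m) hpt
    calc δ ^ m * c2 ≤ δ ^ m * (u - l) :=
          mul_le_mul_of_nonneg_left hlen (pow_nonneg hδ0.le m)
      _ ≤ ∫ y in (0:ℝ)..1, psiConv γ (m+1) (x - y) * psi γ y := hfin
      _ = psiConv γ (m+2) x := rfl
  rcases le_or_gt t (K * δ) with hcase | hcase
  · -- Case B : t small, wrap around
    set l := max t (t + 1 - b) with hl
    have hlt : t ≤ l := le_max_left _ _
    have hltb : t + 1 - b ≤ l := le_max_right _ _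
    apply main l γ (le_trans ht0 hlt) hγ1.le
    · rcases min_cases (((m:ℝ)+1)*(γ-δ)) 1 with ⟨hbe, hble⟩ | ⟨hbe, hbgt⟩
      · have hbeq : b = ((m:ℝ)+1)*(γ-δ) := by rw [hb]; exact hbe
        have hleq : l = t + 1 - b := max_eq_right (by linarith only [hb1])
        rw [hleq, hbeq]
        linarith only [hbE, hmδ, hcase, hδ3, hc2E, hE0.le]
      · have hbeq : b = 1 := by rw [hb]; exact hbe
        have hleq : l = t := by rw [hl, hbeq]; simp
        rw [hleq]
        linarith only [hcase, hδ1, hc2γ]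
    · intro y hy
      have hty : l < y := hy.1
      have hyγ : y < γ := hy.2
      have hy0 : 0 < y := lt_of_le_of_lt (le_trans ht0 hlt) hty
      have hyt : t < y := lt_of_le_of_lt hlt hty
      have hy1 : y < 1 := hyγ.trans hγ1
      have hfr : Int.fract (x - y) = t - y + 1 := by
        rw [ht] at hyt ⊢
        exact fract_x_sub' hyt hy1
      have hfy : Int.fract y = y := Int.fract_eq_self.mpr ⟨hy0.le, hy1⟩
      have hpsiy : psi γ y = 1 := by rw [psi, hfy, if_pos ⟨hy0, hyγ.le⟩]
      have hIH : δ ^ m ≤ psiConv γ (m+1) (x - y) := by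
        apply key_induction γ hγ0 hγ1 hδ0 h3δ m (x - y)
        · rw [hfr]; linarith only [hyγ, haγ, ht0, ha]
        · rw [hfr, ← hb]; linarith only [hltb, hty]
      calc δ ^ m ≤ psiConv γ (m+1) (x - y) := hIH
        _ = psiConv γ (m+1) (x - y) * psi γ y := by rw [hpsiy, mul_one]
  · -- Case A : t large
    set l := max 0 (t - b) with hl
    set u := min (t - a) γ with hu
    have h0l : (0:ℝ) ≤ l := le_max_left _ _
    have huγ : u ≤ γ := min_le_right _ _
    apply main l u h0l (huγ.trans hγ1.le)
    · rcases le_or_gt t b with hc | hc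
      · have hleq : l = 0 := max_eq_left (by linarith only [hc])
        have h5 : δ ≤ u := le_min (by linarith only [hcase, haδK])
          (by linarith only [h3δ, hδ0])
        rw [hleq]; linarith only [h5, hc2δ]
      · have hleq : l = t - b := max_eq_right (by linarith only [hc])
        have hblt : b = ((m:ℝ)+1)*(γ-δ) := by
          rcases min_cases (((m:ℝ)+1)*(γ-δ)) 1 with ⟨h, _⟩ | ⟨h, hgt⟩
          · rw [hb]; exact h
          · exfalso
            have hb1' : b = 1 := by rw [hb]; exact h
            rw [hb1'] at hc
            linarith only [hc, ht1]
        rcases min_cases (t - a) γ with ⟨hueq, hle2⟩ | ⟨hueq, hlt2⟩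
        · have hueq' : u = t - a := by rw [hu]; exact hueq
          rw [hueq', hleq, hblt, ha]
          linarith only [mul_nonneg hm0 (by linarith only [h3δ, hδ0.le] : (0:ℝ) ≤ γ - 2*δ),
            hc2δ, h3δ]
        · have hueq' : u = γ := by rw [hu]; exact hueq
          rw [hueq', hleq, hblt]
          linarith only [hbE, hmδ, ht1, hδ3, hc2E, hE0.le, hcase]
    · intro y hy
      have hy0 : 0 < y := lt_of_le_of_lt h0l hy.1
      have hyγ : y < γ := lt_of_lt_of_le hy.2 huγ
      have hyu : y < t - a := lt_of_lt_of_le hy.2 (min_le_left _ _)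
      have hylb : t - b < y := lt_of_le_of_lt (le_max_right 0 (t - b)) hy.1
      have hyt : y < t := by linarith only [hyu, hapos]
      have hfr : Int.fract (x - y) = t - y := by
        rw [ht] at hyt ⊢
        exact fract_x_sub hy0 hyt
      have hfy : Int.fract y = y := Int.fract_eq_self.mpr ⟨hy0.le, hyγ.trans hγ1⟩
      have hpsiy : psi γ y = 1 := by rw [psi, hfy, if_pos ⟨hy0, hyγ.le⟩]
      have hIH : δ ^ m ≤ psiConv γ (m+1) (x - y) := by
        apply key_induction γ hγ0 hγ1 hδ0 h3δ m (x - y)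
        · rw [hfr]; linarith only [hyu, ha]
        · rw [hfr, ← hb]; linarith only [hylb]
      calc δ ^ m ≤ psiConv γ (m+1) (x - y) := hIH
        _ = psiConv γ (m+1) (x - y) * psi γ y := by rw [hpsiy, mul_one]

end
end

section
/- Let α > 1 and γ = α^{-1} ∈ (0,1). If κ is an integer with 1 ≤ κ < ⌈α⌉ and x ∈ (0, γ], then ψ^{(κ)}(x) = x^{κ−1}/(κ−1)!. -/
open scoped BigOperators

noncomputable section

lemma psiAux (α : ℝ) (hα : 1 < α) : ∀ κ : ℕ, 1 ≤ κ → ((κ : ℝ) < α) →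
    (∀ x ∈ Set.Ioc (0:ℝ) α⁻¹, psiConv α⁻¹ κ x = x ^ (κ - 1) / (Nat.factorial (κ - 1) : ℝ)) ∧
    (∀ z ∈ Set.Ioc ((κ : ℝ) * α⁻¹ - 1) (0:ℝ), psiConv α⁻¹ κ z = 0) := by
  have hα0 : (0:ℝ) < α := lt_trans one_pos hα
  have hγ0 : (0:ℝ) < α⁻¹ := inv_pos.mpr hα0
  have hγ1 : α⁻¹ < 1 := inv_lt_one_of_one_lt₀ hα
  intro κ hκ
  induction κ, hκ using Nat.le_induction with
  | base =>
    intro _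
    constructor
    · intro x hx
      have hx1 : x < 1 := lt_of_le_of_lt hx.2 hγ1
      have hf : Int.fract x = x := Int.fract_eq_self.mpr ⟨hx.1.le, hx1⟩
      simp [psiConv, psi, hf, hx.1, hx.2]
    · intro z hz
      rcases eq_or_lt_of_le hz.2 with rfl | hz0
      · simp [psiConv, psi]
      · have hfl : ⌊z⌋ = -1 := by
          apply Int.floor_eq_iff.mpr
          constructor
          · push_cast
            nlinarith [hz.1]
          · push_cast; linarith
        have hf : Int.fract z = z + 1 := by
          rw [Int.fract, hfl]; push_cast; ring
        have : ¬ (Int.fract z ≤ α⁻¹) := by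
          rw [hf]
          push_cast at hz ⊢
          nlinarith [hz.1]
        simp [psiConv, psi, this]
  | succ n hn ih =>
    intro hna
    have hnlt : (n : ℝ) < α := by push_cast at hna ⊢; linarith
    obtain ⟨ihv, ihz⟩ := ih hnlt
    obtain ⟨m, rfl⟩ : ∃ m, n = m + 1 := ⟨n - 1, (Nat.succ_pred_eq_of_pos hn).symm⟩
    have h2 : ((m : ℝ) + 2) < α := by push_cast at hna ⊢; linarith
    have hstep : ((m : ℝ) + 2) * α⁻¹ < 1 := by
      calc ((m : ℝ) + 2) * α⁻¹ < α * α⁻¹ := by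
            exact mul_lt_mul_of_pos_right h2 hγ0
        _ = 1 := mul_inv_cancel₀ hα0.ne'
    constructor
    · intro x hx
      have hx1 : x < 1 := lt_of_le_of_lt hx.2 hγ1
      have key : (∫ y in (0:ℝ)..1, psiConv α⁻¹ (m + 1) (x - y) * psi α⁻¹ y)
          = ∫ y in (0:ℝ)..1, Set.indicator (Set.Ioo 0 x)
              (fun y => (x - y) ^ m / (Nat.factorial m : ℝ)) y := by
        apply intervalIntegral.integral_congr_ae
        have hne : ∀ᵐ y : ℝ, y ≠ x := by
          rw [MeasureTheory.ae_iff]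
          simpa using MeasureTheory.measure_singleton x
        filter_upwards [hne] with y hy hmem
        rw [Set.uIoc_of_le (by norm_num : (0:ℝ) ≤ 1)] at hmem
        rcases lt_or_gt_of_ne hy with hlt | hgt
        · -- y < x : value case
          have hy0 : 0 < y := hmem.1
          have hyγ : y ≤ α⁻¹ := le_of_lt (lt_of_lt_of_le hlt hx.2)
          have hfy : Int.fract y = y := Int.fract_eq_self.mpr ⟨hy0.le, lt_of_lt_of_le hlt hx1.le⟩
          have hpsi : psi α⁻¹ y = 1 := by simp [psi, hfy, hy0, hyγ]
          have hc : psiConv α⁻¹ (m + 1) (x - y) = (x - y) ^ m / (Nat.factorial m : ℝ) := by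
            have := ihv (x - y) (Set.mem_Ioc.mpr ⟨by linarith, by linarith [hx.2]⟩)
            simpa using this
          rw [hc, hpsi, Set.indicator_of_mem (Set.mem_Ioo.mpr ⟨hy0, hlt⟩)]
          ring
        · -- y > x : zero case
          rw [Set.indicator_of_notMem (by simp [hgt.le, not_lt.mpr hgt.le] : y ∉ Set.Ioo 0 x)]
          rcases le_or_gt y α⁻¹ with hyγ | hyγ
          · have hc : psiConv α⁻¹ (m + 1) (x - y) = 0 := by
              apply ihz (x - y)
              refine Set.mem_Ioc.mpr ⟨?_, by linarith⟩
              push_cast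
              nlinarith [hx.1, hγ0]
            rw [hc, zero_mul]
          · rcases eq_or_lt_of_le hmem.2 with rfl | hy1
            · simp [psi]
            · have hfy : Int.fract y = y := Int.fract_eq_self.mpr ⟨hmem.1.le, hy1⟩
              have : ¬ (Int.fract y ≤ α⁻¹) := by rw [hfy]; linarith
              simp [psi, this]
      have hval : (∫ y in (0:ℝ)..1, Set.indicator (Set.Ioo 0 x)
          (fun y => (x - y) ^ m / (Nat.factorial m : ℝ)) y)
          = ∫ y in (0:ℝ)..x, (x - y) ^ m / (Nat.factorial m : ℝ) := by
        rw [intervalIntegral.integral_of_le (by norm_num : (0:ℝ) ≤ 1),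
          MeasureTheory.setIntegral_indicator measurableSet_Ioo,
          Set.inter_eq_self_of_subset_right
            (Set.Ioo_subset_Ioc_self.trans (Set.Ioc_subset_Ioc_right hx1.le)),
          intervalIntegral.integral_of_le hx.1.le,
          MeasureTheory.integral_Ioc_eq_integral_Ioo]
      have hpow : (∫ y in (0:ℝ)..x, (x - y) ^ m) = x ^ (m + 1) / (m + 1) := by
        rw [intervalIntegral.integral_comp_sub_left (fun u => u ^ m) x]
        simp [integral_pow]
      have : psiConv α⁻¹ (m + 1 + 1) x
          = ∫ y in (0:ℝ)..1, psiConv α⁻¹ (m + 1) (x - y) * psi α⁻¹ y := rfl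
      rw [this, key, hval, intervalIntegral.integral_div, hpow]
      have hm1 : ((m + 1 + 1 - 1 : ℕ) : ℝ) = (m : ℝ) + 1 := by push_cast; ring
      simp only [Nat.add_sub_cancel, Nat.factorial_succ]
      have hf0 : (Nat.factorial m : ℝ) ≠ 0 := Nat.cast_ne_zero.mpr (Nat.factorial_ne_zero m)
      have hm0 : ((m : ℝ) + 1) ≠ 0 := by positivity
      field_simp
      push_cast; ring
    · intro z hz
      have hrw : psiConv α⁻¹ (m + 1 + 1) z
          = ∫ y in (0:ℝ)..1, psiConv α⁻¹ (m + 1) (z - y) * psi α⁻¹ y := rfl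
      rw [hrw]
      have : (∫ y in (0:ℝ)..1, psiConv α⁻¹ (m + 1) (z - y) * psi α⁻¹ y)
          = ∫ y in (0:ℝ)..1, (0:ℝ) := by
        apply intervalIntegral.integral_congr
        intro y hy
        rw [Set.uIcc_of_le (by norm_num : (0:ℝ) ≤ 1)] at hy
        rcases eq_or_lt_of_le hy.1 with rfl | hy0
        · simp [psi]
        · rcases le_or_gt y α⁻¹ with hyγ | hyγ
          · have hc : psiConv α⁻¹ (m + 1) (z - y) = 0 := by
              apply ihz (z - y)
              refine Set.mem_Ioc.mpr ⟨?_, by linarith [hz.2]⟩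
              have hz1 := hz.1
              push_cast at hz1 ⊢
              nlinarith [hz1]
            simp [hc]
          · rcases eq_or_lt_of_le hy.2 with rfl | hy1
            · simp [psi]
            · have hfy : Int.fract y = y := Int.fract_eq_self.mpr ⟨hy0.le, hy1⟩
              have : ¬ (Int.fract y ≤ α⁻¹) := by rw [hfy]; linarith
              simp [psi, this]
      rw [this]
      simp

theorem statement17 (α : ℝ) (hα : 1 < α) (κ : ℕ) (hκ₁ : 1 ≤ κ) (hκ₂ : κ < ⌈α⌉₊)
    (x : ℝ) (hx : x ∈ Set.Ioc (0 : ℝ) α⁻¹) :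
    psiConv α⁻¹ κ x = x ^ (κ - 1) / (Nat.factorial (κ - 1) : ℝ) := by
  have hκα : (κ : ℝ) < α := by
    have h1 : (κ : ℝ) + 1 ≤ (⌈α⌉₊ : ℕ) := by exact_mod_cast hκ₂
    have h2 : (⌈α⌉₊ : ℝ) < α + 1 := Nat.ceil_lt_add_one (by linarith)
    push_cast at h1
    linarith
  exact (psiAux α hα κ hκ₁ hκα).1 x hx

end
end

section
/- Let α > 1 be irrational, γ = α^{-1} ∈ (0,1), and κ = ⌈α⌉ (the least integer ≥ α). Then the lower bound ψ^{(κ)}(x) ≥ (κγ − 1)^{κ−1} / (2^{κ−2} (κ−1)!) holds uniformly for all x ∈ ℝ, and this bound is sharp: equality holds at x = (κγ − 1)/2. -/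
open scoped BigOperators

noncomputable section

open MeasureTheory intervalIntegral Set

/-- `gg γ k = f_{k+1}`, the (k+1)-fold convolution of the indicator of `(0,γ]` on ℝ. -/
def gg (γ : ℝ) : ℕ → ℝ → ℝ
  | 0 => fun x => if 0 < x ∧ x ≤ γ then 1 else 0
  | (k+1) => fun x => ∫ y in (0:ℝ)..γ, gg γ k (x - y)

lemma gg_zero_def (γ x : ℝ) : gg γ 0 x = if 0 < x ∧ x ≤ γ then 1 else 0 := rfl

lemma gg_succ_def (γ : ℝ) (k : ℕ) (x : ℝ) :
    gg γ (k+1) x = ∫ y in (0:ℝ)..γ, gg γ k (x - y) := rfl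

lemma gg_succ (γ : ℝ) (k : ℕ) (x : ℝ) :
    gg γ (k+1) x = ∫ u in (x-γ)..x, gg γ k u := by
  rw [gg_succ_def]
  have := intervalIntegral.integral_comp_sub_left (a := (0:ℝ)) (b := γ) (gg γ k) x
  simpa using this

/-- helper: interval integrals agree if functions agree off a countable set. -/
lemma integral_congr_off_countable {f g : ℝ → ℝ} {a b : ℝ} (s : Set ℝ) (hs : s.Countable)
    (h : ∀ x ∈ Set.uIoc a b, x ∉ s → f x = g x) :
    ∫ x in a..b, f x = ∫ x in a..b, g x := by
  apply intervalIntegral.integral_congr_ae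
  have h0 : ∀ᵐ x : ℝ, x ∉ s := by
    rw [MeasureTheory.ae_iff]; simpa using hs.measure_zero volume
  filter_upwards [h0] with x hx hmem
  exact h x hmem hx

lemma gg_pkg (γ : ℝ) (hγ0 : 0 < γ) (hγ1 : γ ≤ 1) (k : ℕ) :
    Measurable (gg γ k) ∧ (∀ x, 0 ≤ gg γ k x ∧ gg γ k x ≤ 1) ∧
      ∀ a b, IntervalIntegrable (gg γ k) volume a b := by
  induction k with
  | zero =>
    have hind : gg γ 0 = (Set.Ioc 0 γ).indicator (fun _ => (1:ℝ)) := by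
      funext x; simp [gg_zero_def, Set.indicator, Set.mem_Ioc]
    refine ⟨?_, ?_, ?_⟩
    · rw [hind]; exact (measurable_const).indicator measurableSet_Ioc
    · intro x; rw [gg_zero_def]; split <;> norm_num
    · intro a b
      rw [hind]
      exact ((integrable_indicator_iff measurableSet_Ioc).2
        (integrableOn_const measure_Ioc_lt_top.ne)).intervalIntegrable
  | succ k ih =>
    obtain ⟨hm, hb, hi⟩ := ih
    have hnorm : ∀ a b : ℝ, ‖∫ u in a..b, gg γ k u‖ ≤ 1 * |b - a| := by
      intro a b
      exact intervalIntegral.norm_integral_le_of_norm_le_const (fun x _ => by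
        rw [Real.norm_eq_abs, abs_le]; exact ⟨by linarith [(hb x).1], (hb x).2⟩)
    have hlip : LipschitzWith 2 (gg γ (k+1)) := by
      apply LipschitzWith.of_dist_le_mul
      intro x z
      rw [Real.dist_eq, Real.dist_eq, gg_succ, gg_succ]
      have e1 : (∫ u in (x-γ)..x, gg γ k u) - ∫ u in (z-γ)..z, gg γ k u
          = (∫ u in (x-γ)..(z-γ), gg γ k u) + ∫ u in z..x, gg γ k u := by
        have h1 := intervalIntegral.integral_add_adjacent_intervals
          (hi (x-γ) (z-γ)) (hi (z-γ) z)
        have h2 := intervalIntegral.integral_add_adjacent_intervals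
          (hi (x-γ) z) (hi z x)
        linarith [h1, h2]
      rw [e1]
      calc |(∫ u in (x-γ)..(z-γ), gg γ k u) + ∫ u in z..x, gg γ k u|
          ≤ |∫ u in (x-γ)..(z-γ), gg γ k u| + |∫ u in z..x, gg γ k u| := abs_add_le _ _
        _ ≤ 1 * |z - γ - (x - γ)| + 1 * |x - z| := by
            exact add_le_add (hnorm _ _) (hnorm _ _)
        _ ≤ 2 * |x - z| := by
            have : |z - γ - (x - γ)| = |x - z| := by
              rw [show z - γ - (x-γ) = -(x-z) by ring, abs_neg]
            rw [this]; push_cast; ring_nf; rfl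
    have hc : Continuous (gg γ (k+1)) := hlip.continuous
    refine ⟨hc.measurable, ?_, fun a b => hc.intervalIntegrable a b⟩
    intro x
    rw [gg_succ]
    constructor
    · exact intervalIntegral.integral_nonneg (by linarith) (fun u _ => (hb u).1)
    · calc (∫ u in (x-γ)..x, gg γ k u) ≤ ∫ _u in (x-γ)..x, (1:ℝ) :=
          intervalIntegral.integral_mono_on (by linarith) (hi _ _)
            (intervalIntegrable_const) (fun u _ => (hb u).2)
        _ = γ := by rw [intervalIntegral.integral_const]; simp
        _ ≤ 1 := hγ1

lemma gg_measurable (γ : ℝ) (hγ0 : 0 < γ) (hγ1 : γ ≤ 1) (k : ℕ) : Measurable (gg γ k) :=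
  (gg_pkg γ hγ0 hγ1 k).1

lemma gg_bdd (γ : ℝ) (hγ0 : 0 < γ) (hγ1 : γ ≤ 1) (k : ℕ) (x : ℝ) :
    0 ≤ gg γ k x ∧ gg γ k x ≤ 1 := (gg_pkg γ hγ0 hγ1 k).2.1 x

lemma gg_nonneg (γ : ℝ) (hγ0 : 0 < γ) (hγ1 : γ ≤ 1) (k : ℕ) (x : ℝ) : 0 ≤ gg γ k x :=
  ((gg_pkg γ hγ0 hγ1 k).2.1 x).1

lemma gg_intInt (γ : ℝ) (hγ0 : 0 < γ) (hγ1 : γ ≤ 1) (k : ℕ) (a b : ℝ) :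
    IntervalIntegrable (gg γ k) volume a b := (gg_pkg γ hγ0 hγ1 k).2.2 a b

lemma gg_zero_of_nonpos (γ : ℝ) (hγ0 : 0 < γ) (k : ℕ) : ∀ x ≤ 0, gg γ k x = 0 := by
  induction k with
  | zero => intro x hx; rw [gg_zero_def, if_neg]; rintro ⟨h1, -⟩; linarith
  | succ k ih =>
    intro x hx
    rw [gg_succ]
    rw [show (0:ℝ) = ∫ u in (x-γ)..x, (0:ℝ) by simp]
    apply intervalIntegral.integral_congr
    intro u hu
    rw [Set.uIcc_of_le (by linarith)] at hu
    exact ih u (le_trans hu.2 hx)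

lemma gg_zero_of_gt (γ : ℝ) (hγ0 : 0 < γ) (k : ℕ) : ∀ x, ((k:ℝ)+1) * γ < x → gg γ k x = 0 := by
  induction k with
  | zero => intro x hx; rw [gg_zero_def, if_neg]; push_cast at hx; rintro ⟨-, h2⟩; linarith
  | succ k ih =>
    intro x hx
    push_cast at hx
    rw [gg_succ]
    rw [show (0:ℝ) = ∫ u in (x-γ)..x, (0:ℝ) by simp]
    apply intervalIntegral.integral_congr
    intro u hu
    rw [Set.uIcc_of_le (by linarith)] at hu
    apply ih u
    push_cast
    linarith [hu.1]

lemma int_left_zero {γ : ℝ} (hγ0 : 0 < γ) (k : ℕ) (x : ℝ) (hx : x ≤ γ) :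
    (∫ v in (x-γ)..(0:ℝ), gg γ k v) = 0 := by
  have : (∫ v in (x-γ)..(0:ℝ), gg γ k v) = ∫ v in (x-γ)..(0:ℝ), (0:ℝ) := by
    apply intervalIntegral.integral_congr
    intro v hv
    rw [Set.uIcc_of_le (by linarith)] at hv
    exact gg_zero_of_nonpos γ hγ0 k v hv.2
  simpa using this

lemma gg_int_explicit {γ : ℝ} (hγ0 : 0 < γ) (hγ1 : γ ≤ 1) (k : ℕ) :
    ∀ x, 0 ≤ x → x ≤ γ → (∫ u in (0:ℝ)..x, gg γ k u) = x^(k+1) / (Nat.factorial (k+1)) := by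
  induction k with
  | zero =>
    intro x h0 h1
    have : (∫ u in (0:ℝ)..x, gg γ 0 u) = ∫ u in (0:ℝ)..x, (1:ℝ) := by
      apply intervalIntegral.integral_congr_ae
      filter_upwards with u hu
      rw [Set.uIoc_of_le h0] at hu
      rw [gg_zero_def, if_pos ⟨hu.1, le_trans hu.2 h1⟩]
    rw [this]; simp [Nat.factorial]
  | succ k ih =>
    intro x h0 h1
    have hexp : ∀ u, 0 ≤ u → u ≤ γ → gg γ (k+1) u = u^(k+1) / (Nat.factorial (k+1)) := by
      intro u hu0 hu1
      rw [gg_succ]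
      have hsplit := intervalIntegral.integral_add_adjacent_intervals
        (gg_intInt γ hγ0 hγ1 k (u-γ) 0) (gg_intInt γ hγ0 hγ1 k 0 u)
      rw [← hsplit, int_left_zero hγ0 k u hu1, zero_add]
      exact ih u hu0 hu1
    have : (∫ u in (0:ℝ)..x, gg γ (k+1) u)
        = ∫ u in (0:ℝ)..x, u^(k+1) / (Nat.factorial (k+1)) := by
      apply intervalIntegral.integral_congr_ae
      filter_upwards with u hu
      rw [Set.uIoc_of_le h0] at hu
      exact hexp u hu.1.le (le_trans hu.2 h1)
    rw [this, intervalIntegral.integral_div, integral_pow, Nat.factorial_succ (k+1)]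
    rw [zero_pow (by omega)]
    push_cast
    field_simp
    ring

lemma gg_explicit {γ : ℝ} (hγ0 : 0 < γ) (hγ1 : γ ≤ 1) (k : ℕ) (x : ℝ)
    (h0 : 0 ≤ x) (h1 : x ≤ γ) :
    gg γ (k+1) x = x^(k+1) / (Nat.factorial (k+1)) := by
  rw [gg_succ]
  have hsplit := intervalIntegral.integral_add_adjacent_intervals
    (gg_intInt γ hγ0 hγ1 k (x-γ) 0) (gg_intInt γ hγ0 hγ1 k 0 x)
  rw [← hsplit, int_left_zero hγ0 k x h1, zero_add]
  exact gg_int_explicit hγ0 hγ1 k x h0 h1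

lemma gg_symm (γ : ℝ) (hγ0 : 0 < γ) (k : ℕ) :
    ∀ x, gg γ (k+1) (((k:ℝ)+2) * γ - x) = gg γ (k+1) x := by
  induction k with
  | zero =>
    intro x
    rw [gg_succ, gg_succ]
    have h1 : (∫ v in (x-γ)..x, gg γ 0 (γ - v)) = ∫ u in (γ - x)..(γ-(x-γ)), gg γ 0 u :=
      intervalIntegral.integral_comp_sub_left (gg γ 0) γ
    have h2 : (∫ v in (x-γ)..x, gg γ 0 (γ - v)) = ∫ v in (x-γ)..x, gg γ 0 v := by
      apply integral_congr_off_countable {0, γ} (by simp)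
      intro v _ hv
      simp only [Set.mem_insert_iff, Set.mem_singleton_iff, not_or] at hv
      have hcond : (0 < γ - v ∧ γ - v ≤ γ) ↔ (0 < v ∧ v ≤ γ) := by
        constructor
        · rintro ⟨a, b⟩
          exact ⟨lt_of_le_of_ne (by linarith) (Ne.symm hv.1), by linarith⟩
        · rintro ⟨a, b⟩
          refine ⟨?_, by linarith⟩
          have : v < γ := lt_of_le_of_ne b hv.2
          linarith
      rw [gg_zero_def, gg_zero_def]
      simp only [hcond]
    rw [← h2, h1]
    congr 1 <;> push_cast <;> ring
  | succ k ih =>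
    intro x
    rw [gg_succ, gg_succ]
    have h1 : (∫ v in (x-γ)..x, gg γ (k+1) (((k:ℝ)+2)*γ - v))
        = ∫ u in (((k:ℝ)+2)*γ - x)..(((k:ℝ)+2)*γ-(x-γ)), gg γ (k+1) u :=
      intervalIntegral.integral_comp_sub_left (gg γ (k+1)) (((k:ℝ)+2)*γ)
    have h2 : (∫ v in (x-γ)..x, gg γ (k+1) (((k:ℝ)+2)*γ - v))
        = ∫ v in (x-γ)..x, gg γ (k+1) v := by
      apply intervalIntegral.integral_congr
      intro v _
      exact ih v
    rw [← h2, h1]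
    congr 1 <;> push_cast <;> ring

lemma gg_comp_of_mono {γ : ℝ} (hγ0 : 0 < γ) (hγ1 : γ ≤ 1) (m : ℕ)
    (mono : ∀ a b : ℝ, a ≤ b → b ≤ ((m:ℝ)+2)*γ/2 → gg γ (m+1) a ≤ gg γ (m+1) b)
    (s t : ℝ) (h : |s - ((m:ℝ)+2)*γ/2| ≤ |t - ((m:ℝ)+2)*γ/2|) :
    gg γ (m+1) t ≤ gg γ (m+1) s := by
  set c := ((m:ℝ)+2)*γ/2 with hc
  have hS : ∀ x, gg γ (m+1) (2*c - x) = gg γ (m+1) x := by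
    intro x
    have h2 : 2*c - x = ((m:ℝ)+2)*γ - x := by rw [hc]; ring
    rw [h2]
    exact gg_symm γ hγ0 m x
  have key : ∀ s t : ℝ, s ≤ c → t ≤ c → |s - c| ≤ |t - c| →
      gg γ (m+1) t ≤ gg γ (m+1) s := by
    intro s t hs ht habs
    rw [abs_of_nonpos (by linarith), abs_of_nonpos (by linarith)] at habs
    exact mono t s (by linarith) hs
  rcases le_total s c with hs | hs <;> rcases le_total t c with ht | ht
  · exact key s t hs ht h
  · rw [← hS t]
    apply key s (2*c - t) hs (by linarith)
    rw [show 2*c - t - c = -(t - c) by ring, abs_neg]; exact h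
  · rw [← hS s]
    apply key (2*c - s) t (by linarith) ht
    rwa [show 2*c - s - c = -(s - c) by ring, abs_neg]
  · rw [← hS s, ← hS t]
    apply key (2*c - s) (2*c - t) (by linarith) (by linarith)
    rwa [show 2*c - s - c = -(s - c) by ring, show 2*c - t - c = -(t - c) by ring,
      abs_neg, abs_neg]

lemma gg_mono {γ : ℝ} (hγ0 : 0 < γ) (hγ1 : γ ≤ 1) (k : ℕ) :
    ∀ a b : ℝ, a ≤ b → b ≤ ((k:ℝ)+1)*γ/2 → gg γ k a ≤ gg γ k b := by
  induction k with
  | zero =>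
    intro a b hab hb
    push_cast at hb
    by_cases h : 0 < a ∧ a ≤ γ
    · rw [gg_zero_def γ a, if_pos h, gg_zero_def γ b, if_pos ⟨by linarith [h.1], by linarith⟩]
    · rw [gg_zero_def γ a, if_neg h]
      exact gg_nonneg γ hγ0 hγ1 0 b
  | succ k ih =>
    intro a b hab hb
    push_cast at hb
    have hpt : ∀ u ∈ Set.Icc a b, gg γ k (u - γ) ≤ gg γ k u := by
      intro u hu
      have hub : u ≤ ((k:ℝ)+2)*γ/2 := le_trans hu.2 (by linarith)
      cases k with
      | zero =>
        rw [gg_zero_of_nonpos γ hγ0 0 (u - γ) (by push_cast at hub; linarith)]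
        exact gg_nonneg γ hγ0 hγ1 0 u
      | succ m =>
        have ih' : ∀ a b : ℝ, a ≤ b → b ≤ ((m:ℝ)+2)*γ/2 → gg γ (m+1) a ≤ gg γ (m+1) b := by
          intro a b hab hbb
          exact ih a b hab (by push_cast at hbb ⊢; linarith)
        apply gg_comp_of_mono hγ0 hγ1 m ih'
        rw [abs_of_nonpos (show u - γ - ((m:ℝ)+2)*γ/2 ≤ 0 by push_cast at hub; linarith)]
        rw [abs_le]
        constructor <;> push_cast at hub ⊢ <;> [linarith; linarith]
    have h1 := intervalIntegral.integral_add_adjacent_intervals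
      (gg_intInt γ hγ0 hγ1 k (a-γ) (b-γ)) (gg_intInt γ hγ0 hγ1 k (b-γ) b)
    have h2 := intervalIntegral.integral_add_adjacent_intervals
      (gg_intInt γ hγ0 hγ1 k (a-γ) a) (gg_intInt γ hγ0 hγ1 k a b)
    have h3 : (∫ u in a..b, gg γ k (u - γ)) = ∫ u in (a-γ)..(b-γ), gg γ k u :=
      intervalIntegral.integral_comp_sub_right (gg γ k) γ
    have h4 : (∫ u in a..b, gg γ k (u - γ)) ≤ ∫ u in a..b, gg γ k u := by
      apply intervalIntegral.integral_mono_on hab ?_ (gg_intInt γ hγ0 hγ1 k a b) hpt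
      have := (gg_intInt γ hγ0 hγ1 k (a-γ) (b-γ)).comp_sub_right γ
      simpa using this
    rw [gg_succ, gg_succ]
    linarith [h1, h2, h3, h4]

lemma fract_sub_low (t y x : ℝ) (h0 : 0 ≤ t - y) (h1 : t - y < 1) (ht : t = Int.fract x) :
    Int.fract (x - y) = t - y := by
  subst ht
  have hf : Int.fract x = x - ⌊x⌋ := (Int.self_sub_floor x).symm
  have : x - y = (⌊x⌋ : ℝ) + (Int.fract x - y) := by rw [hf]; ring
  rw [this, Int.fract_intCast_add, Int.fract_eq_self.mpr ⟨h0, h1⟩]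

lemma fract_sub_high (t y x : ℝ) (h0 : 0 ≤ t - y + 1) (h1 : t - y + 1 < 1)
    (ht : t = Int.fract x) : Int.fract (x - y) = t - y + 1 := by
  subst ht
  have hf : Int.fract x = x - ⌊x⌋ := (Int.self_sub_floor x).symm
  have : x - y = ((⌊x⌋ - 1 : ℤ) : ℝ) + (Int.fract x - y + 1) := by
    push_cast; rw [hf]; ring
  rw [this, Int.fract_intCast_add, Int.fract_eq_self.mpr ⟨h0, h1⟩]

/-- reduction of the defining integral to `∫₀^γ gg`-composite. -/
lemma psiConv_step {γ : ℝ} (hγ0 : 0 < γ) (hγ1 : γ < 1) (m : ℕ)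
    (hP : ∀ z, psiConv γ (m+1) z = gg γ m (Int.fract z)) (x : ℝ) :
    psiConv γ (m+2) x = ∫ y in (0:ℝ)..γ, gg γ m (Int.fract (x - y)) := by
  have hdef : psiConv γ (m+2) x = ∫ y in (0:ℝ)..1, psiConv γ (m+1) (x - y) * psi γ y := rfl
  set F : ℝ → ℝ := fun y => gg γ m (Int.fract (x - y)) with hF
  set H : ℝ → ℝ := (Set.Ioc (0:ℝ) γ).indicator F with hH
  have hHeq : Set.EqOn (fun y => psiConv γ (m+1) (x - y) * psi γ y) H (Set.uIcc 0 1) := by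
    intro y hy
    rw [Set.uIcc_of_le (by norm_num : (0:ℝ) ≤ 1)] at hy
    simp only [hP, psi, hH, hF, Set.indicator, Set.mem_Ioc]
    rcases eq_or_lt_of_le hy.2 with h1 | h1
    · have : Int.fract y = 0 := by rw [h1]; simp
      rw [this]
      simp only [lt_irrefl, false_and, if_false, mul_zero]
      rw [if_neg]
      norm_num
      intro h; linarith
    · have : Int.fract y = y := Int.fract_eq_self.mpr ⟨hy.1, h1⟩
      rw [this]
      by_cases hc : 0 < y ∧ y ≤ γ
      · rw [if_pos hc, if_pos hc, mul_one]
      · rw [if_neg hc, if_neg hc, mul_zero]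
  rw [hdef, intervalIntegral.integral_congr hHeq]
  have hFm : Measurable F := by
    apply (gg_measurable γ hγ0 hγ1.le m).comp
    exact measurable_fract.comp (measurable_const.sub measurable_id)
  have hHint : Integrable H volume := by
    rw [hH, integrable_indicator_iff measurableSet_Ioc]
    apply Measure.integrableOn_of_bounded (M := 1) (by simp) hFm.aestronglyMeasurable
    filter_upwards with y
    rw [hF, Real.norm_eq_abs, abs_le]
    constructor
    · linarith [(gg_bdd γ hγ0 hγ1.le m (Int.fract (x-y))).1]
    · exact (gg_bdd γ hγ0 hγ1.le m (Int.fract (x-y))).2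
  have hsplit := intervalIntegral.integral_add_adjacent_intervals
    (f := H) (μ := volume) (a := 0) (b := γ) (c := 1)
    (hHint.intervalIntegrable) (hHint.intervalIntegrable)
  have hright : (∫ y in γ..(1:ℝ), H y) = 0 := by
    have : (∫ y in γ..(1:ℝ), H y) = ∫ y in γ..(1:ℝ), (0:ℝ) := by
      apply intervalIntegral.integral_congr_ae
      filter_upwards with y hy
      rw [Set.uIoc_of_le hγ1.le] at hy
      rw [hH]
      apply Set.indicator_of_notMem
      rw [Set.mem_Ioc]
      push_neg
      intro _; exact hy.1
    simpa using this
  have hleft : (∫ y in (0:ℝ)..γ, H y) = ∫ y in (0:ℝ)..γ, F y := by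
    apply intervalIntegral.integral_congr_ae
    filter_upwards with y hy
    rw [Set.uIoc_of_le hγ0.le] at hy
    rw [hH, Set.indicator_of_mem hy]
  rw [← hsplit, hright, add_zero, hleft]

/-- `psiConv γ (m+1) = gg γ m ∘ fract` when `(m+1)γ < 1`. -/
lemma psiConv_eq {γ : ℝ} (hγ0 : 0 < γ) (hγ1 : γ < 1) :
    ∀ m : ℕ, ((m:ℝ)+1) * γ < 1 → ∀ x, psiConv γ (m+1) x = gg γ m (Int.fract x) := by
  intro m
  induction m with
  | zero =>
    intro _ x
    show psi γ x = _
    rw [psi, gg_zero_def]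
  | succ m ih =>
    intro hm x
    have hm' : ((m:ℝ)+1) * γ < 1 := by
      push_cast at hm
      nlinarith [hγ0]
    rw [psiConv_step hγ0 hγ1 m (ih hm')]
    set t := Int.fract x with htdef
    have ht0 : 0 ≤ t := Int.fract_nonneg x
    have ht1 : t < 1 := Int.fract_lt_one x
    have hptwise : ∀ y ∈ Set.uIcc (0:ℝ) γ,
        gg γ m (Int.fract (x - y)) = gg γ m (t - y) := by
      intro y hy
      rw [Set.uIcc_of_le hγ0.le, Set.mem_Icc] at hy
      rcases le_or_gt y t with h | h
      · rw [fract_sub_low t y x (by linarith) (by linarith) htdef]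
      · rw [fract_sub_high t y x (by linarith) (by linarith) htdef]
        rw [gg_zero_of_nonpos γ hγ0 m (t - y) (by linarith)]
        apply gg_zero_of_gt γ hγ0 m
        push_cast at hm ⊢
        nlinarith [hy.2, ht0]
    rw [intervalIntegral.integral_congr hptwise]
    exact (gg_succ_def γ m t).symm

lemma psiConv_bridge {γ : ℝ} (hγ0 : 0 < γ) (hγ1 : γ < 1) (K : ℕ)
    (hK : ((K:ℝ)+1) * γ < 1) (x : ℝ) :
    psiConv γ (K+2) x = gg γ (K+1) (Int.fract x) + gg γ (K+1) (Int.fract x + 1) := by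
  rw [psiConv_step hγ0 hγ1 K (psiConv_eq hγ0 hγ1 K hK)]
  set t := Int.fract x with htdef
  have ht0 : 0 ≤ t := Int.fract_nonneg x
  have ht1 : t < 1 := Int.fract_lt_one x
  have hpt : ∀ y ∈ Set.uIcc (0:ℝ) γ,
      gg γ K (Int.fract (x - y)) = gg γ K (t - y) + gg γ K (t + 1 - y) := by
    intro y hy
    rw [Set.uIcc_of_le hγ0.le, Set.mem_Icc] at hy
    rcases le_or_gt y t with h | h
    · rw [fract_sub_low t y x (by linarith) (by linarith) htdef]
      rw [gg_zero_of_gt γ hγ0 K (t+1-y) (by push_cast; linarith), add_zero]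
    · rw [fract_sub_high t y x (by linarith) (by linarith) htdef]
      rw [gg_zero_of_nonpos γ hγ0 K (t - y) (by linarith), zero_add]
      ring_nf
  rw [intervalIntegral.integral_congr hpt]
  have hA : IntervalIntegrable (fun y => gg γ K (t - y)) volume 0 γ := by
    have := (gg_intInt γ hγ0 hγ1.le K t (t-γ)).comp_sub_left t
    simpa using this
  have hB : IntervalIntegrable (fun y => gg γ K (t + 1 - y)) volume 0 γ := by
    have := (gg_intInt γ hγ0 hγ1.le K (t+1) (t+1-γ)).comp_sub_left (t+1)
    simpa using this
  rw [intervalIntegral.integral_add hA hB, ← gg_succ_def, ← gg_succ_def]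

theorem statement19 (α : ℝ) (hα : 1 < α) (hirr : Irrational α)
    (κ : ℕ) (hκ : κ = ⌈α⌉₊) :
    (∀ x : ℝ,
      ((κ : ℝ) * α⁻¹ - 1) ^ (κ - 1) / (2 ^ (κ - 2) * (Nat.factorial (κ - 1) : ℝ)) ≤
        psiConv α⁻¹ κ x) ∧
    psiConv α⁻¹ κ (((κ : ℝ) * α⁻¹ - 1) / 2) =
      ((κ : ℝ) * α⁻¹ - 1) ^ (κ - 1) / (2 ^ (κ - 2) * (Nat.factorial (κ - 1) : ℝ)) := by
  have hα0 : (0:ℝ) < α := by linarith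
  set γ := α⁻¹ with hγdef
  have hγ0 : 0 < γ := by positivity
  have hγ1 : γ < 1 := by
    rw [hγdef, inv_lt_one_iff₀]; right; exact hα
  have hκ2 : 2 ≤ κ := by
    rw [hκ]
    have : 1 < ⌈α⌉₊ := Nat.lt_ceil.mpr (by exact_mod_cast hα)
    omega
  obtain ⟨K, rfl⟩ : ∃ K, κ = K + 2 := ⟨κ - 2, by omega⟩
  have hkk1 : K + 2 - 1 = K + 1 := rfl
  have hkk2 : K + 2 - 2 = K := rfl
  rw [hkk1, hkk2]
  have hup : ((K:ℝ)+1) * γ < 1 := by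
    have h1 : ((K:ℝ)+2) < α + 1 := by
      have := Nat.ceil_lt_add_one hα0.le
      rw [← hκ] at this
      push_cast at this
      linarith
    rw [hγdef]
    rw [mul_inv_lt_iff₀ hα0, one_mul]
    linarith
  have hlow : 1 < ((K:ℝ)+2) * γ := by
    have h1 : α < (K:ℝ)+2 := by
      have h2 : α ≤ ((K+2 : ℕ):ℝ) := by rw [hκ]; exact Nat.le_ceil α
      have h3 : α ≠ ((K+2:ℕ):ℝ) := hirr.ne_nat (K+2)
      push_cast at h2 h3
      exact lt_of_le_of_ne (by linarith) h3
    rw [hγdef, lt_mul_inv_iff₀ hα0, one_mul]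
    linarith
  set δ : ℝ := ((K:ℝ)+2) * γ - 1 with hδdef
  have hδ0 : 0 < δ := by rw [hδdef]; linarith
  have hδγ : δ < γ := by rw [hδdef]; linarith
  have hδ1 : δ < 1 := by linarith
  have hconst : ((K+2:ℕ) : ℝ) * γ - 1 = δ := by push_cast; rw [hδdef]
  rw [hconst]
  have hfact : (0:ℝ) < (Nat.factorial (K+1) : ℝ) := by
    exact_mod_cast Nat.factorial_pos (K+1)
  have hsymm : ∀ u : ℝ, gg γ (K+1) (u + 1) = gg γ (K+1) (δ - u) := by
    intro u
    have := gg_symm γ hγ0 K (u + 1)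
    rw [show ((K:ℝ)+2) * γ - (u+1) = δ - u by rw [hδdef]; ring] at this
    exact this.symm
  have hval : ∀ t : ℝ, 0 ≤ t → t ≤ δ →
      gg γ (K+1) t + gg γ (K+1) (t+1)
        = t^(K+1) / (Nat.factorial (K+1)) + (δ - t)^(K+1) / (Nat.factorial (K+1)) := by
    intro t h0 h1
    rw [gg_explicit hγ0 hγ1.le K t h0 (by linarith), hsymm t,
      gg_explicit hγ0 hγ1.le K (δ - t) (by linarith) (by linarith)]
  have hBeq : δ ^ (K+1) / (2 ^ K * (Nat.factorial (K+1) : ℝ))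
      = 2 * (δ/2)^(K+1) / (Nat.factorial (K+1)) := by
    rw [div_pow]
    field_simp
    ring
  constructor
  · intro x
    rw [psiConv_bridge hγ0 hγ1 K hup x]
    set t := Int.fract x with htdef
    have ht0 : 0 ≤ t := Int.fract_nonneg x
    have ht1 : t < 1 := Int.fract_lt_one x
    rcases le_or_gt t δ with hc | hc
    · rw [hval t ht0 hc, hBeq]
      have hconv : (δ/2)^(K+1) ≤ (t^(K+1) + (δ - t)^(K+1)) / 2 := by
        have := (convexOn_pow (𝕜 := ℝ) (K+1)).2 (Set.mem_Ici.mpr ht0)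
          (Set.mem_Ici.mpr (by linarith : (0:ℝ) ≤ δ - t))
          (by norm_num : (0:ℝ) ≤ 1/2) (by norm_num : (0:ℝ) ≤ 1/2) (by norm_num)
        simp only [smul_eq_mul] at this
        calc (δ/2)^(K+1) = ((1/2) * t + (1/2) * (δ - t))^(K+1) := by ring_nf
          _ ≤ (1/2) * t^(K+1) + (1/2) * (δ-t)^(K+1) := this
          _ = (t^(K+1) + (δ - t)^(K+1)) / 2 := by ring
      rw [← add_div]
      apply div_le_div_of_nonneg_right ?_ hfact.le
      linarith
    · rw [gg_zero_of_gt γ hγ0 (K+1) (t+1) (by push_cast; rw [hδdef] at hc; linarith), add_zero]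
      have h1 : gg γ (K+1) δ ≤ gg γ (K+1) t := by
        apply gg_comp_of_mono hγ0 hγ1.le K
        · intro a b hab hb
          exact gg_mono hγ0 hγ1.le (K+1) a b hab (by push_cast at hb ⊢; linarith)
        · have hc2 : δ ≤ ((K:ℝ)+2)*γ/2 := by rw [hδdef]; nlinarith
          have hrhs : |δ - ((K:ℝ)+2)*γ/2| = -(δ - ((K:ℝ)+2)*γ/2) :=
            abs_of_nonpos (by linarith)
          rw [hrhs, abs_le]
          constructor <;> [linarith [hδdef]; linarith [hδdef]]
      rw [gg_explicit hγ0 hγ1.le K δ hδ0.le hδγ.le] at h1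
      refine le_trans ?_ h1
      have h2 : (1:ℝ) ≤ 2^K := one_le_pow₀ (by norm_num)
      apply div_le_div_of_nonneg_left (by positivity) hfact
      nlinarith
  · have hhalf : Int.fract (δ/2) = δ/2 := Int.fract_eq_self.mpr ⟨by linarith, by linarith⟩
    rw [psiConv_bridge hγ0 hγ1 K hup, hhalf, hval (δ/2) (by linarith) (by linarith), hBeq]
    rw [show δ - δ/2 = δ/2 by ring]
    ring

end
end
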